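/- arXiv:1506.05170 — 6 statements merged into one kernel-verified Lean document; each statement's English description precedes it below -/
import Mathlib

section
/- Let f : E → ℝ∪{+∞} be lower semicontinuous and prox-bounded, x a point with f(x) finite, and v ∈ E a vector in the Fréchet subdifferential of f at x. If α_i ↓ 0 and x_i ∈ P_{α_i} f(x + α_i v) (the proximal mapping), then (x_i − x)/α_i → 0 and (f_{α_i}(x + α_i v) − f(x))/α_i → |v|²/2. -/
open Filter Topology RealInnerProductSpace

/-- The Moreau envelope. -/
noncomputable def mEnv {E : Type*} [NormedAddCommGroup E] [InnerProductSpace ℝ E]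
    (f : E → EReal) (α : ℝ) (x : E) : EReal :=
  ⨅ y, f y + ((‖y - x‖ ^ 2 / (2 * α) : ℝ) : EReal)

/-- The proximal mapping `P_α f(x) = argmin_y { f(y) + ‖y−x‖²/(2α) }`. -/
def proxSet {E : Type*} [NormedAddCommGroup E] [InnerProductSpace ℝ E]
    (f : E → EReal) (α : ℝ) (x : E) : Set E :=
  {y | ∀ z, f y + ((‖y - x‖ ^ 2 / (2 * α) : ℝ) : EReal)
      ≤ f z + ((‖z - x‖ ^ 2 / (2 * α) : ℝ) : EReal)}

/-- `v` is a Fréchet subgradient of `f` at `x`: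
`f(y) ≥ f(x) + ⟨v, y−x⟩ + o(‖y−x‖)`. -/
def FSubgrad {E : Type*} [NormedAddCommGroup E] [InnerProductSpace ℝ E]
    (f : E → EReal) (x v : E) : Prop :=
  ∀ ε : ℝ, 0 < ε → ∀ᶠ y in nhds x,
    f x + (((inner ℝ v (y - x) : ℝ) - ε * ‖y - x‖) : EReal) ≤ f y

/-- `f` is prox-bounded: it majorizes some quadratic. -/
def ProxBounded {E : Type*} [NormedAddCommGroup E] [InnerProductSpace ℝ E]
    (f : E → EReal) : Prop :=
  ∃ r c : ℝ, ∀ y, ((-(r / 2) * ‖y‖ ^ 2 - c : ℝ) : EReal) ≤ f y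

set_option maxHeartbeats 1000000 in
/-- If `f` is lsc and prox-bounded, `f x` is finite, `v` is a Fréchet subgradient of `f`
at `x`, `α_i ↓ 0` and `x_i ∈ P_{α_i} f(x + α_i v)`, then `(x_i − x)/α_i → 0` and
`(f_{α_i}(x + α_i v) − f(x))/α_i → ‖v‖²/2`. -/
theorem statement1 {E : Type*} [NormedAddCommGroup E] [InnerProductSpace ℝ E]
    [FiniteDimensional ℝ E]
    (f : E → EReal) (hlsc : LowerSemicontinuous f) (hpb : ProxBounded f)
    (x : E) (fx : ℝ) (hfx : f x = (fx : EReal))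
    (v : E) (hv : FSubgrad f x v)
    (α : ℕ → ℝ) (hαpos : ∀ i, 0 < α i) (hα : Tendsto α atTop (nhds 0))
    (xs : ℕ → E) (hxs : ∀ i, xs i ∈ proxSet f (α i) (x + α i • v)) :
    Tendsto (fun i => (α i)⁻¹ • (xs i - x)) atTop (nhds 0) ∧
      Tendsto (fun i => (mEnv f (α i) (x + α i • v) - f x) / ((α i : ℝ) : EReal))
        atTop (nhds ((‖v‖ ^ 2 / 2 : ℝ) : EReal)) := by
  obtain ⟨r₀, c, hrc₀⟩ := hpb
  set r : ℝ := max r₀ 0 with hrdef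
  have hr0 : (0:ℝ) ≤ r := le_max_right _ _
  have hrc : ∀ y, ((-(r / 2) * ‖y‖ ^ 2 - c : ℝ) : EReal) ≤ f y := by
    intro y
    refine le_trans ?_ (hrc₀ y)
    rw [EReal.coe_le_coe_iff]
    have h1 : r₀ ≤ r := le_max_left _ _
    nlinarith [sq_nonneg ‖y‖]
  -- the basic inequality from comparing with z = x
  have hXnorm : ∀ i, ‖x - (x + α i • v)‖ ^ 2 / (2 * α i) = α i * ‖v‖ ^ 2 / 2 := by
    intro i
    have ha := hαpos i
    have h1 : x - (x + α i • v) = -(α i • v) := by abel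
    rw [h1, norm_neg, norm_smul, Real.norm_eq_abs, abs_of_pos ha]
    field_simp
  have hA : ∀ i, f (xs i) + ((‖xs i - (x + α i • v)‖ ^ 2 / (2 * α i) : ℝ) : EReal)
      ≤ ((fx + α i * ‖v‖ ^ 2 / 2 : ℝ) : EReal) := by
    intro i
    have h := hxs i x
    rw [hfx, hXnorm i, ← EReal.coe_add] at h
    exact h
  have hne_top : ∀ i, f (xs i) ≠ ⊤ := by
    intro i h
    have h2 := hA i
    rw [h, EReal.top_add_coe, top_le_iff] at h2
    exact EReal.coe_ne_top _ h2
  have hne_bot : ∀ i, f (xs i) ≠ ⊥ :=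
    fun i => ne_of_gt (lt_of_lt_of_le (EReal.bot_lt_coe _) (hrc (xs i)))
  set g : ℕ → ℝ := fun i => (f (xs i)).toReal with hgdef
  have hg : ∀ i, f (xs i) = ((g i : ℝ) : EReal) :=
    fun i => (EReal.coe_toReal (hne_top i) (hne_bot i)).symm
  have hAr : ∀ i, g i + ‖xs i - (x + α i • v)‖ ^ 2 / (2 * α i) ≤ fx + α i * ‖v‖ ^ 2 / 2 := by
    intro i
    have h := hA i
    rw [hg i, ← EReal.coe_add, EReal.coe_le_coe_iff] at h
    exact h
  have hBr : ∀ i, -(r / 2) * ‖xs i‖ ^ 2 - c ≤ g i := by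
    intro i
    have h := hrc (xs i)
    rw [hg i, EReal.coe_le_coe_iff] at h
    exact h
  -- step: ‖xs i - (x + α i • v)‖² eventually bounded by something → 0
  have hsmall : ∀ᶠ i in atTop, 2 * α i * r ≤ 1/2 := by
    have h14 : (0:ℝ) < 1 / (4 * r + 1) := by positivity
    filter_upwards [hα.eventually (eventually_lt_nhds h14)] with i hi
    have ha := hαpos i
    have h2 : α i * (4 * r + 1) < 1 := (lt_div_iff₀ (by positivity)).mp hi
    nlinarith
  have hDb : ∀ᶠ i in atTop, ‖xs i - (x + α i • v)‖ ^ 2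
      ≤ 2 * (2 * α i * (fx + c) + (α i) ^ 2 * ‖v‖ ^ 2 + 2 * α i * r * ‖x + α i • v‖ ^ 2) := by
    filter_upwards [hsmall] with i hi
    have ha := hαpos i
    have h1 : ‖xs i - (x + α i • v)‖ ^ 2
        ≤ (fx + α i * ‖v‖ ^ 2 / 2 - g i) * (2 * α i) := by
      have h0 : ‖xs i - (x + α i • v)‖ ^ 2 / (2 * α i) ≤ fx + α i * ‖v‖ ^ 2 / 2 - g i := by
        linarith [hAr i]
      rwa [div_le_iff₀ (by positivity : (0:ℝ) < 2 * α i)] at h0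
    have h2 : -(2 * α i) * g i ≤ α i * r * ‖xs i‖ ^ 2 + 2 * α i * c := by
      nlinarith [hBr i, ha.le]
    have hnorm0 : ‖xs i‖ ≤ ‖xs i - (x + α i • v)‖ + ‖x + α i • v‖ := by
      calc ‖xs i‖ = ‖(xs i - (x + α i • v)) + (x + α i • v)‖ := by rw [sub_add_cancel]
        _ ≤ _ := norm_add_le _ _
    have hnorm : ‖xs i‖ ^ 2 ≤ 2 * ‖xs i - (x + α i • v)‖ ^ 2 + 2 * ‖x + α i • v‖ ^ 2 := by
      nlinarith [sq_nonneg (‖xs i - (x + α i • v)‖ - ‖x + α i • v‖), norm_nonneg (xs i)]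
    have h3 : α i * r * ‖xs i‖ ^ 2
        ≤ α i * r * (2 * ‖xs i - (x + α i • v)‖ ^ 2 + 2 * ‖x + α i • v‖ ^ 2) :=
      mul_le_mul_of_nonneg_left hnorm (by positivity)
    nlinarith [sq_nonneg ‖xs i - (x + α i • v)‖, hi]
  have hφ : Tendsto (fun t : ℝ => 2 * (2 * t * (fx + c) + t ^ 2 * ‖v‖ ^ 2 + 2 * t * r * ‖x + t • v‖ ^ 2))
      (nhds 0) (nhds 0) := by
    have hcont : Continuous (fun t : ℝ =>
        2 * (2 * t * (fx + c) + t ^ 2 * ‖v‖ ^ 2 + 2 * t * r * ‖x + t • v‖ ^ 2)) := by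
      fun_prop
    have h := hcont.tendsto 0
    simpa using h
  have hD0 : Tendsto (fun i => 2 * (2 * α i * (fx + c) + (α i) ^ 2 * ‖v‖ ^ 2
      + 2 * α i * r * ‖x + α i • v‖ ^ 2)) atTop (nhds 0) := hφ.comp hα
  have hd2 : Tendsto (fun i => ‖xs i - (x + α i • v)‖ ^ 2) atTop (nhds 0) :=
    squeeze_zero' (Eventually.of_forall fun i => sq_nonneg _) hDb hD0
  have hdt : Tendsto (fun i => ‖xs i - (x + α i • v)‖) atTop (nhds 0) := by
    have h := (Real.continuous_sqrt.tendsto 0).comp hd2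
    rw [Real.sqrt_zero] at h
    exact h.congr fun i => Real.sqrt_sq (norm_nonneg _)
  have hxsx : Tendsto xs atTop (nhds x) := by
    rw [tendsto_iff_norm_sub_tendsto_zero]
    have hb : ∀ i, ‖xs i - x‖ ≤ ‖xs i - (x + α i • v)‖ + |α i| * ‖v‖ := by
      intro i
      have h1 : xs i - x = (xs i - (x + α i • v)) + α i • v := by abel
      rw [h1]
      refine (norm_add_le _ _).trans ?_
      rw [norm_smul, Real.norm_eq_abs]
    have hlim : Tendsto (fun i => ‖xs i - (x + α i • v)‖ + |α i| * ‖v‖) atTop (nhds 0) := by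
      have h := hdt.add (hα.abs.mul_const ‖v‖)
      simpa using h
    exact squeeze_zero' (Eventually.of_forall fun i => norm_nonneg _)
      (Eventually.of_forall hb) hlim
  -- subgradient inequality applied to xs i
  have hC : ∀ ε : ℝ, 0 < ε → ∀ᶠ i in atTop,
      fx + (inner ℝ v (xs i - x) : ℝ) - ε * ‖xs i - x‖ ≤ g i := by
    intro ε hε
    filter_upwards [hxsx.eventually (hv ε hε)] with i hi
    rw [hfx, hg i] at hi
    have hi' : fx + ((inner ℝ v (xs i - x) : ℝ) - ε * ‖xs i - x‖) ≤ g i := by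
      exact_mod_cast hi
    linarith
  have hd_eq : ∀ i, ‖xs i - (x + α i • v)‖ ^ 2
      = ‖xs i - x‖ ^ 2 - 2 * (α i * (inner ℝ v (xs i - x) : ℝ)) + (α i) ^ 2 * ‖v‖ ^ 2 := by
    intro i
    have h1 : xs i - (x + α i • v) = (xs i - x) - α i • v := by abel
    rw [h1, norm_sub_sq_real, real_inner_smul_right, norm_smul, Real.norm_eq_abs,
      real_inner_comm]
    rw [mul_pow, sq_abs]
  -- eventual bound on ‖xs i - x‖
  have hkey : ∀ ε : ℝ, 0 < ε → ∀ᶠ i in atTop, ‖xs i - x‖ ≤ 2 * ε * α i := by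
    intro ε hε
    filter_upwards [hC ε hε] with i hi
    have ha := hαpos i
    have hAi := hAr i
    have hdi := hd_eq i
    have h1 : (‖xs i - x‖ ^ 2 - 2 * (α i * (inner ℝ v (xs i - x) : ℝ)) + (α i) ^ 2 * ‖v‖ ^ 2)
        / (2 * α i) ≤ α i * ‖v‖ ^ 2 / 2 - ((inner ℝ v (xs i - x) : ℝ) - ε * ‖xs i - x‖) := by
      rw [← hdi]; linarith
    rw [div_le_iff₀ (by positivity : (0:ℝ) < 2 * α i)] at h1
    have h2 : ‖xs i - x‖ ^ 2 ≤ 2 * ε * α i * ‖xs i - x‖ := by nlinarith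
    have hεa : (0:ℝ) < 2 * ε * α i := by positivity
    nlinarith [norm_nonneg (xs i - x)]
  have first : Tendsto (fun i => (α i)⁻¹ • (xs i - x)) atTop (nhds 0) := by
    rw [NormedAddCommGroup.tendsto_nhds_zero]
    intro ε hε
    filter_upwards [hkey (ε/3) (by positivity)] with i hi
    have ha := hαpos i
    rw [norm_smul, norm_inv, Real.norm_eq_abs, abs_of_pos ha]
    have h1 : (α i)⁻¹ * ‖xs i - x‖ ≤ (α i)⁻¹ * (2 * (ε/3) * α i) :=
      mul_le_mul_of_nonneg_left hi (by positivity)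
    have h2 : (α i)⁻¹ * (2 * (ε/3) * α i) = 2 * ε / 3 := by
      field_simp
    rw [h2] at h1
    linarith
  refine ⟨first, ?_⟩
  -- Moreau envelope identity
  have hM : ∀ i, mEnv f (α i) (x + α i • v)
      = ((g i + ‖xs i - (x + α i • v)‖ ^ 2 / (2 * α i) : ℝ) : EReal) := by
    intro i
    have h1 : mEnv f (α i) (x + α i • v)
        = f (xs i) + ((‖xs i - (x + α i • v)‖ ^ 2 / (2 * α i) : ℝ) : EReal) :=
      le_antisymm (iInf_le _ (xs i)) (le_iInf (hxs i))
    rw [h1, hg i, ← EReal.coe_add]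
  -- real-valued tendsto for the envelope
  have htend2 : Tendsto
      (fun i => (g i + ‖xs i - (x + α i • v)‖ ^ 2 / (2 * α i) - fx) / α i)
      atTop (nhds (‖v‖ ^ 2 / 2)) := by
    rw [Metric.tendsto_nhds]
    intro δ hδ
    have hε : 0 < Real.sqrt δ := Real.sqrt_pos.2 hδ
    have hε2 : Real.sqrt δ ^ 2 = δ := Real.sq_sqrt hδ.le
    filter_upwards [hC (Real.sqrt δ) hε] with i hi
    have ha := hαpos i
    have hAi := hAr i
    set ε := Real.sqrt δ with hεdef
    have hup : (g i + ‖xs i - (x + α i • v)‖ ^ 2 / (2 * α i) - fx) / α i ≤ ‖v‖ ^ 2 / 2 := by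
      rw [div_le_iff₀ ha]
      nlinarith [hAi]
    have hquad : ‖xs i - (x + α i • v)‖ ^ 2 / (2 * α i)
        = ‖xs i - x‖ ^ 2 / (2 * α i) - (inner ℝ v (xs i - x) : ℝ) + α i * ‖v‖ ^ 2 / 2 := by
      rw [hd_eq i]
      field_simp
    have hkey2 : ε * ‖xs i - x‖ - ε ^ 2 * α i / 2 ≤ ‖xs i - x‖ ^ 2 / (2 * α i) := by
      rw [le_div_iff₀ (by positivity : (0:ℝ) < 2 * α i)]
      nlinarith [sq_nonneg (‖xs i - x‖ - ε * α i)]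
    have hlow : ‖v‖ ^ 2 / 2 - ε ^ 2 / 2
        ≤ (g i + ‖xs i - (x + α i • v)‖ ^ 2 / (2 * α i) - fx) / α i := by
      rw [le_div_iff₀ ha]
      nlinarith [hi, hkey2, hquad]
    rw [Real.dist_eq, abs_lt]
    constructor <;> nlinarith [hup, hlow, hε2, hδ]
  have heq : ∀ i, (mEnv f (α i) (x + α i • v) - f x) / ((α i : ℝ) : EReal)
      = (((g i + ‖xs i - (x + α i • v)‖ ^ 2 / (2 * α i) - fx) / α i : ℝ) : EReal) := by
    intro i
    rw [hM i, hfx, ← EReal.coe_sub, ← EReal.coe_div]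
  exact Tendsto.congr (fun i => (heq i).symm) (EReal.tendsto_coe.2 htend2)
end

section
/- Let f : E → ℝ∪{+∞} with f(x) finite. A vector v lies in the proximal subdifferential of f at x with global parameter r = 1/α (i.e., f(y) ≥ f(x) + ⟨v, y−x⟩ − (1/(2α))|y−x|² for all y) if and only if x ∈ P_α f(x + αv), and this holds if and only if f_α(x + αv) = f(x) + (α/2)|v|². -/
lemma aux_le (a b : ℝ) (g : EReal) :
    (a : EReal) ≤ g + (b : EReal) ↔ ((a - b : ℝ) : EReal) ≤ g := by
  induction g using EReal.rec with
  | bot =>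
      simp only [EReal.bot_add, le_bot_iff]
      simp only [EReal.coe_ne_bot]
  | coe r =>
      rw [← EReal.coe_add]
      simp only [EReal.coe_le_coe_iff]
      constructor <;> intro <;> linarith
  | top => simp

lemma key_alg {E : Type*} [NormedAddCommGroup E] [InnerProductSpace ℝ E]
    (x v : E) (α : ℝ) (hα : 0 < α) (z : E) :
    ‖z - (x + α • v)‖ ^ 2 / (2 * α)
      = ‖z - x‖ ^ 2 / (2 * α) - (inner ℝ v (z - x) : ℝ) + α / 2 * ‖v‖ ^ 2 := by
  have hz : z - (x + α • v) = (z - x) - α • v := by abel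
  rw [hz, norm_sub_sq_real, real_inner_smul_right, norm_smul,
    real_inner_comm]
  rw [Real.norm_eq_abs, abs_of_pos hα]
  field_simp

/-- A vector `v` is a proximal subgradient of `f` at `x` with global parameter `1/α`
(`f(y) ≥ f(x) + ⟨v, y−x⟩ − ‖y−x‖²/(2α)` for all `y`) iff `x ∈ P_α f(x + αv)`, iff
`f_α(x + αv) = f(x) + (α/2)‖v‖²`. -/
theorem statement3 {E : Type*} [NormedAddCommGroup E] [InnerProductSpace ℝ E]
    [FiniteDimensional ℝ E]
    (f : E → EReal) (hbot : ∀ y, f y ≠ ⊥)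
    (x : E) (fx : ℝ) (hfx : f x = (fx : EReal))
    (v : E) (α : ℝ) (hα : 0 < α) :
    ((∀ y, f x + (((inner ℝ v (y - x) : ℝ) - ‖y - x‖ ^ 2 / (2 * α) : ℝ) : EReal) ≤ f y)
        ↔ x ∈ proxSet f α (x + α • v))
      ∧ (x ∈ proxSet f α (x + α • v)
        ↔ mEnv f α (x + α • v) = f x + ((α / 2 * ‖v‖ ^ 2 : ℝ) : EReal)) := by
  have hxw : ‖x - (x + α • v)‖ ^ 2 / (2 * α) = α / 2 * ‖v‖ ^ 2 := by
    rw [key_alg x v α hα x]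
    simp
  -- reduce each condition to a real statement
  have hmem : x ∈ proxSet f α (x + α • v) ↔
      (∀ z, ((fx + α / 2 * ‖v‖ ^ 2 - ‖z - (x + α • v)‖ ^ 2 / (2 * α) : ℝ) : EReal) ≤ f z) := by
    constructor
    · intro h z
      have := h z
      rw [hfx, hxw, ← EReal.coe_add, aux_le] at this
      exact this
    · intro h z
      have := h z
      rw [← aux_le, EReal.coe_add] at this
      rw [hfx, hxw]
      exact this
  constructor
  · constructor
    · intro h
      rw [hmem]
      intro z
      have := h z
      rw [hfx, ← EReal.coe_add] at this
      refine le_trans (le_of_eq ?_) this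
      congr 1
      rw [key_alg x v α hα z]
      ring
    · intro h y
      rw [hmem] at h
      have := h y
      rw [hfx, ← EReal.coe_add]
      refine le_trans (le_of_eq ?_) this
      congr 1
      rw [key_alg x v α hα y]
      ring
  · constructor
    · intro h
      rw [hfx, ← EReal.coe_add]
      apply le_antisymm
      · have := iInf_le (fun z => f z + ((‖z - (x + α • v)‖ ^ 2 / (2 * α) : ℝ) : EReal)) x
        refine le_trans this ?_
        rw [hfx, hxw, ← EReal.coe_add]
      · apply le_iInf
        intro z
        have := h z
        rw [hfx, hxw, ← EReal.coe_add] at this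
        exact this
    · intro h z
      have h1 : mEnv f α (x + α • v) ≤ f z + ((‖z - (x + α • v)‖ ^ 2 / (2 * α) : ℝ) : EReal) :=
        iInf_le _ z
      rw [h, hfx] at h1
      rw [hfx, hxw]
      exact h1
end

section
/- For any two real symmetric n×n matrices X and Y, the vectors of eigenvalues in nonincreasing order satisfy |λ(X) − λ(Y)| ≤ |X − Y|, where the left norm is the Euclidean norm on ℝⁿ and the right norm is the Frobenius norm. -/
/-- The vector of eigenvalues of a symmetric matrix, listed in nonincreasing order
(junk value `0` for non-Hermitian matrices). -/
noncomputable def eigd {n : ℕ} (X : Matrix (Fin n) (Fin n) ℝ) : Fin n → ℝ :=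
  if h : X.IsHermitian then
    fun i => h.eigenvalues (Tuple.sort h.eigenvalues i.rev)
  else 0

open Matrix


open Finset in
lemma sum_swap4 {M : Type*} [AddCommMonoid M] (s t u v : Finset ℕ) (f : ℕ → ℕ → ℕ → ℕ → M) :
    ∑ i ∈ s, ∑ j ∈ t, ∑ k ∈ u, ∑ l ∈ v, f i j k l
      = ∑ k ∈ u, ∑ l ∈ v, ∑ i ∈ s, ∑ j ∈ t, f i j k l := by
  calc ∑ i ∈ s, ∑ j ∈ t, ∑ k ∈ u, ∑ l ∈ v, f i j k l
      = ∑ i ∈ s, ∑ k ∈ u, ∑ j ∈ t, ∑ l ∈ v, f i j k l :=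
        Finset.sum_congr rfl fun i _ => Finset.sum_comm
    _ = ∑ k ∈ u, ∑ i ∈ s, ∑ j ∈ t, ∑ l ∈ v, f i j k l := Finset.sum_comm
    _ = ∑ k ∈ u, ∑ i ∈ s, ∑ l ∈ v, ∑ j ∈ t, f i j k l :=
        Finset.sum_congr rfl fun k _ => Finset.sum_congr rfl fun i _ => Finset.sum_comm
    _ = ∑ k ∈ u, ∑ l ∈ v, ∑ i ∈ s, ∑ j ∈ t, f i j k l :=
        Finset.sum_congr rfl fun k _ => Finset.sum_comm

open Finset in
lemma keyNat (n : ℕ) (a b : ℕ → ℝ) (S : ℕ → ℕ → ℝ)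
    (ha : ∀ k, a (k+1) ≤ a k) (hb : ∀ k, b (k+1) ≤ b k)
    (ha0 : a n = 0) (hb0 : b n = 0)
    (hS : ∀ i j, 0 ≤ S i j)
    (hrow : ∀ i < n, ∑ j ∈ range n, S i j = 1)
    (hcol : ∀ j < n, ∑ i ∈ range n, S i j = 1) :
    ∑ i ∈ range n, ∑ j ∈ range n, S i j * (a i * b j)
      ≤ ∑ i ∈ range n, a i * b i := by
  set α : ℕ → ℝ := fun k => a k - a (k+1) with hα
  set β : ℕ → ℝ := fun k => b k - b (k+1) with hβ
  have hαnn : ∀ k, 0 ≤ α k := fun k => sub_nonneg.2 (ha k)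
  have hβnn : ∀ k, 0 ≤ β k := fun k => sub_nonneg.2 (hb k)
  have hA : ∀ i < n, a i = ∑ k ∈ range n, if i ≤ k then α k else 0 := by
    intro i hi
    rw [← Finset.sum_filter]
    have hf : (range n).filter (fun k => i ≤ k) = Finset.Ico i n := by
      ext k; simp [Finset.mem_Ico]; omega
    rw [hf, Finset.sum_Ico_eq_sub _ hi.le, hα]
    simp only
    rw [Finset.sum_range_sub' a, Finset.sum_range_sub' a, ha0]
    ring
  have hB : ∀ i < n, b i = ∑ k ∈ range n, if i ≤ k then β k else 0 := by
    intro i hi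
    rw [← Finset.sum_filter]
    have hf : (range n).filter (fun k => i ≤ k) = Finset.Ico i n := by
      ext k; simp [Finset.mem_Ico]; omega
    rw [hf, Finset.sum_Ico_eq_sub _ hi.le, hβ]
    simp only
    rw [Finset.sum_range_sub' b, Finset.sum_range_sub' b, hb0]
    ring
  set T : ℕ → ℕ → ℝ := fun k l => ∑ i ∈ range n, ∑ j ∈ range n,
      if i ≤ k ∧ j ≤ l then S i j else 0 with hT
  set N : ℕ → ℕ → ℝ := fun k l => ∑ i ∈ range n, if i ≤ k ∧ i ≤ l then (1:ℝ) else 0 with hN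
  have hLHS : ∑ i ∈ range n, ∑ j ∈ range n, S i j * (a i * b j)
      = ∑ k ∈ range n, ∑ l ∈ range n, α k * β l * T k l := by
    have step1 : ∀ i ∈ range n, ∀ j ∈ range n, S i j * (a i * b j)
        = ∑ k ∈ range n, ∑ l ∈ range n,
            (if i ≤ k ∧ j ≤ l then S i j else 0) * (α k * β l) := by
      intro i hi j hj
      rw [hA i (mem_range.1 hi), hB j (mem_range.1 hj), Finset.sum_mul_sum]
      rw [Finset.mul_sum]
      refine Finset.sum_congr rfl fun k _ => ?_
      rw [Finset.mul_sum]
      refine Finset.sum_congr rfl fun l _ => ?_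
      by_cases h1 : i ≤ k <;> by_cases h2 : j ≤ l <;> simp [h1, h2] <;> ring
    calc ∑ i ∈ range n, ∑ j ∈ range n, S i j * (a i * b j)
        = ∑ i ∈ range n, ∑ j ∈ range n, ∑ k ∈ range n, ∑ l ∈ range n,
            (if i ≤ k ∧ j ≤ l then S i j else 0) * (α k * β l) :=
          Finset.sum_congr rfl fun i hi => Finset.sum_congr rfl fun j hj => step1 i hi j hj
      _ = ∑ k ∈ range n, ∑ l ∈ range n, ∑ i ∈ range n, ∑ j ∈ range n,
            (if i ≤ k ∧ j ≤ l then S i j else 0) * (α k * β l) := sum_swap4 _ _ _ _ _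
      _ = ∑ k ∈ range n, ∑ l ∈ range n, α k * β l * T k l := by
          refine Finset.sum_congr rfl fun k _ => Finset.sum_congr rfl fun l _ => ?_
          rw [hT]; simp only
          rw [Finset.mul_sum]
          refine Finset.sum_congr rfl fun i _ => ?_
          rw [Finset.mul_sum]
          refine Finset.sum_congr rfl fun j _ => ?_
          ring
  have hRHS : ∑ i ∈ range n, a i * b i
      = ∑ k ∈ range n, ∑ l ∈ range n, α k * β l * N k l := by
    calc ∑ i ∈ range n, a i * b i
        = ∑ i ∈ range n, ∑ k ∈ range n, ∑ l ∈ range n,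
            (if i ≤ k ∧ i ≤ l then (1:ℝ) else 0) * (α k * β l) := by
          refine Finset.sum_congr rfl fun i hi => ?_
          rw [hA i (mem_range.1 hi), hB i (mem_range.1 hi), Finset.sum_mul_sum]
          refine Finset.sum_congr rfl fun k _ => Finset.sum_congr rfl fun l _ => ?_
          by_cases h1 : i ≤ k <;> by_cases h2 : i ≤ l <;> simp [h1, h2]
      _ = ∑ k ∈ range n, ∑ l ∈ range n, ∑ i ∈ range n,
            (if i ≤ k ∧ i ≤ l then (1:ℝ) else 0) * (α k * β l) := by
          rw [Finset.sum_comm]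
          refine Finset.sum_congr rfl fun k _ => Finset.sum_comm
      _ = ∑ k ∈ range n, ∑ l ∈ range n, α k * β l * N k l := by
          refine Finset.sum_congr rfl fun k _ => Finset.sum_congr rfl fun l _ => ?_
          rw [hN]; simp only
          rw [Finset.mul_sum]
          refine Finset.sum_congr rfl fun i _ => by ring
  rw [hLHS, hRHS]
  refine Finset.sum_le_sum fun k hk => Finset.sum_le_sum fun l hl => ?_
  refine mul_le_mul_of_nonneg_left ?_ (mul_nonneg (hαnn k) (hβnn l))
  -- T k l ≤ N k l
  have indsum : ∀ m, m < n → (∑ i ∈ range n, if i ≤ m then (1:ℝ) else 0) = (m+1 : ℕ) := by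
    intro m hm
    rw [Finset.sum_boole]
    congr 1
    have : (range n).filter (fun i => i ≤ m) = range (m+1) := by
      ext i; simp [Nat.lt_succ_iff]; omega
    rw [this, Finset.card_range]
  rcases le_total k l with hkl | hkl
  · -- N k l = k+1, T ≤ k+1
    have hNval : N k l = (k+1 : ℕ) := by
      rw [hN]; simp only
      rw [← indsum k (mem_range.1 hk)]
      refine Finset.sum_congr rfl fun i _ => ?_
      have hiff : (i ≤ k ∧ i ≤ l) ↔ i ≤ k := ⟨fun h => h.1, fun h => ⟨h, h.trans hkl⟩⟩
      simp only [hiff]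
    rw [hNval, hT]; simp only
    calc (∑ i ∈ range n, ∑ j ∈ range n, if i ≤ k ∧ j ≤ l then S i j else 0)
        ≤ ∑ i ∈ range n, if i ≤ k then (1:ℝ) else 0 := by
          refine Finset.sum_le_sum fun i hi => ?_
          by_cases h : i ≤ k
          · simp only [h, true_and, if_true]
            calc (∑ j ∈ range n, if j ≤ l then S i j else 0)
                ≤ ∑ j ∈ range n, S i j := by
                  refine Finset.sum_le_sum fun j _ => ?_
                  by_cases h2 : j ≤ l <;> simp [h2, hS i j]
              _ = 1 := hrow i (mem_range.1 hi)
          · simp only [h, false_and, if_false]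
            refine le_of_eq (Finset.sum_eq_zero fun j _ => by simp [h])
      _ = (k+1 : ℕ) := indsum k (mem_range.1 hk)
  · -- N k l = l+1, T ≤ l+1
    have hNval : N k l = (l+1 : ℕ) := by
      rw [hN]; simp only
      rw [← indsum l (mem_range.1 hl)]
      refine Finset.sum_congr rfl fun i _ => ?_
      have hiff : (i ≤ k ∧ i ≤ l) ↔ i ≤ l := ⟨fun h => h.2, fun h => ⟨h.trans hkl, h⟩⟩
      simp only [hiff]
    rw [hNval, hT]; simp only
    rw [Finset.sum_comm]
    calc (∑ j ∈ range n, ∑ i ∈ range n, if i ≤ k ∧ j ≤ l then S i j else 0)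
        ≤ ∑ j ∈ range n, if j ≤ l then (1:ℝ) else 0 := by
          refine Finset.sum_le_sum fun j hj => ?_
          by_cases h : j ≤ l
          · simp only [h, and_true, if_true]
            calc (∑ i ∈ range n, if i ≤ k then S i j else 0)
                ≤ ∑ i ∈ range n, S i j := by
                  refine Finset.sum_le_sum fun i _ => ?_
                  by_cases h2 : i ≤ k <;> simp [h2, hS i j]
              _ = 1 := hcol j (mem_range.1 hj)
          · simp only [h, and_false, if_false]
            refine le_of_eq (Finset.sum_eq_zero fun i _ => by simp [h])
      _ = (l+1 : ℕ) := indsum l (mem_range.1 hl)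

lemma keyFin {n : ℕ} (a b : Fin n → ℝ) (haA : Antitone a) (hbA : Antitone b)
    (S : Fin n → Fin n → ℝ) (hS : ∀ i j, 0 ≤ S i j)
    (hrow : ∀ i, ∑ j, S i j = 1) (hcol : ∀ j, ∑ i, S i j = 1) :
    ∑ i, ∑ j, S i j * (a i * b j) ≤ ∑ i, a i * b i := by
  rcases Nat.eq_zero_or_pos n with hn | hn
  · subst hn; simp
  have hnlt : n - 1 < n := by omega
  set c : ℝ := a ⟨n-1, hnlt⟩ with hc
  set d : ℝ := b ⟨n-1, hnlt⟩ with hd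
  have hca : ∀ i : Fin n, c ≤ a i := fun i => haA (by
    have := i.isLt; rw [Fin.le_def]; simp; omega)
  have hdb : ∀ i : Fin n, d ≤ b i := fun i => hbA (by
    have := i.isLt; rw [Fin.le_def]; simp; omega)
  -- ℕ-level data
  set a' : ℕ → ℝ := fun k => if h : k < n then a ⟨k, h⟩ - c else 0 with ha'
  set b' : ℕ → ℝ := fun k => if h : k < n then b ⟨k, h⟩ - d else 0 with hb'
  set S' : ℕ → ℕ → ℝ := fun i j =>
    if h : i < n ∧ j < n then S ⟨i, h.1⟩ ⟨j, h.2⟩ else 0 with hS'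
  have ha'mono : ∀ k, a' (k+1) ≤ a' k := by
    intro k
    by_cases h1 : k + 1 < n
    · have h0 : k < n := by omega
      simp only [ha', dif_pos h1, dif_pos h0]
      have := haA (show (⟨k, h0⟩ : Fin n) ≤ ⟨k+1, h1⟩ from by simp [Fin.le_def])
      linarith
    · by_cases h0 : k < n
      · simp only [ha', dif_neg h1, dif_pos h0]
        have := hca ⟨k, h0⟩; linarith
      · simp [ha', dif_neg h1, dif_neg h0]
  have hb'mono : ∀ k, b' (k+1) ≤ b' k := by
    intro k
    by_cases h1 : k + 1 < n
    · have h0 : k < n := by omega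
      simp only [hb', dif_pos h1, dif_pos h0]
      have := hbA (show (⟨k, h0⟩ : Fin n) ≤ ⟨k+1, h1⟩ from by simp [Fin.le_def])
      linarith
    · by_cases h0 : k < n
      · simp only [hb', dif_neg h1, dif_pos h0]
        have := hdb ⟨k, h0⟩; linarith
      · simp [hb', dif_neg h1, dif_neg h0]
  have h0a : a' n = 0 := by simp [ha']
  have h0b : b' n = 0 := by simp [hb']
  have hS'nn : ∀ i j, 0 ≤ S' i j := by
    intro i j
    by_cases h : i < n ∧ j < n
    · simp only [hS', dif_pos h]; exact hS _ _
    · simp [hS', dif_neg h]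
  have hrow' : ∀ i < n, ∑ j ∈ Finset.range n, S' i j = 1 := by
    intro i hi
    rw [← Fin.sum_univ_eq_sum_range (fun j => S' i j) n]
    rw [← hrow ⟨i, hi⟩]
    refine Finset.sum_congr rfl fun j _ => ?_
    simp [hS', hi, j.isLt]
  have hcol' : ∀ j < n, ∑ i ∈ Finset.range n, S' i j = 1 := by
    intro j hj
    rw [← Fin.sum_univ_eq_sum_range (fun i => S' i j) n]
    rw [← hcol ⟨j, hj⟩]
    refine Finset.sum_congr rfl fun i _ => ?_
    simp [hS', hj, i.isLt]
  have key := keyNat n a' b' S' ha'mono hb'mono h0a h0b hS'nn hrow' hcol'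
  -- convert back to Fin sums
  have hL : ∑ i ∈ Finset.range n, ∑ j ∈ Finset.range n, S' i j * (a' i * b' j)
      = ∑ i : Fin n, ∑ j : Fin n, S i j * ((a i - c) * (b j - d)) := by
    rw [← Fin.sum_univ_eq_sum_range (fun i => ∑ j ∈ Finset.range n, S' i j * (a' i * b' j)) n]
    refine Finset.sum_congr rfl fun i _ => ?_
    rw [← Fin.sum_univ_eq_sum_range (fun j => S' i.val j * (a' i.val * b' j)) n]
    refine Finset.sum_congr rfl fun j _ => ?_
    simp [hS', ha', hb', i.isLt, j.isLt]
  have hR : ∑ i ∈ Finset.range n, a' i * b' i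
      = ∑ i : Fin n, (a i - c) * (b i - d) := by
    rw [← Fin.sum_univ_eq_sum_range (fun i => a' i * b' i) n]
    refine Finset.sum_congr rfl fun i _ => ?_
    simp [ha', hb', i.isLt]
  rw [hL, hR] at key
  -- expand both sides
  have eL : ∑ i : Fin n, ∑ j : Fin n, S i j * ((a i - c) * (b j - d))
      = (∑ i, ∑ j, S i j * (a i * b j)) - d * (∑ i, a i) - c * (∑ j, b j) + c * d * n := by
    calc ∑ i : Fin n, ∑ j : Fin n, S i j * ((a i - c) * (b j - d))
        = ∑ i : Fin n, ∑ j : Fin n,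
            (S i j * (a i * b j) - d * (S i j * a i) - c * (S i j * b j) + c * d * S i j) := by
          refine Finset.sum_congr rfl fun i _ => Finset.sum_congr rfl fun j _ => by ring
      _ = (∑ i : Fin n, ∑ j : Fin n, S i j * (a i * b j))
            - d * (∑ i : Fin n, ∑ j : Fin n, S i j * a i)
            - c * (∑ i : Fin n, ∑ j : Fin n, S i j * b j)
            + c * d * (∑ i : Fin n, ∑ j : Fin n, S i j) := by
          simp only [Finset.sum_add_distrib, Finset.sum_sub_distrib, Finset.mul_sum]
      _ = (∑ i, ∑ j, S i j * (a i * b j)) - d * (∑ i, a i) - c * (∑ j, b j) + c * d * n := by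
          have h1 : ∑ i : Fin n, ∑ j : Fin n, S i j * a i = ∑ i : Fin n, a i := by
            refine Finset.sum_congr rfl fun i _ => ?_
            rw [← Finset.sum_mul, hrow i, one_mul]
          have h2 : ∑ i : Fin n, ∑ j : Fin n, S i j * b j = ∑ j : Fin n, b j := by
            rw [Finset.sum_comm]
            refine Finset.sum_congr rfl fun j _ => ?_
            rw [← Finset.sum_mul, hcol j, one_mul]
          have h3 : ∑ i : Fin n, ∑ j : Fin n, S i j = n := by
            calc ∑ i : Fin n, ∑ j : Fin n, S i j = ∑ i : Fin n, (1:ℝ) :=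
              Finset.sum_congr rfl fun i _ => hrow i
            _ = n := by simp
          rw [h1, h2, h3]
  have eR : ∑ i : Fin n, (a i - c) * (b i - d)
      = (∑ i, a i * b i) - d * (∑ i, a i) - c * (∑ i, b i) + c * d * n := by
    calc ∑ i : Fin n, (a i - c) * (b i - d)
        = ∑ i : Fin n, (a i * b i - d * a i - c * b i + c * d) := by
          refine Finset.sum_congr rfl fun i _ => by ring
      _ = (∑ i, a i * b i) - d * (∑ i, a i) - c * (∑ i, b i) + ∑ i : Fin n, c * d := by
          simp only [Finset.sum_add_distrib, Finset.sum_sub_distrib, Finset.mul_sum]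
      _ = _ := by simp [Finset.sum_const, nsmul_eq_mul]; ring
  rw [eL, eR] at key
  linarith

lemma trace_diag {n : ℕ} (d e : Fin n → ℝ) (W : Matrix (Fin n) (Fin n) ℝ) :
    trace (diagonal d * W * diagonal e * star W) = ∑ i, ∑ j, (W i j)^2 * (d i * e j) := by
  rw [Matrix.trace]
  simp only [Matrix.diag_apply, Matrix.mul_apply, Matrix.diagonal_apply, Matrix.star_apply,
    star_trivial, ite_mul, mul_ite, zero_mul, mul_zero, Finset.sum_ite_eq, Finset.sum_ite_eq',
    Finset.mem_univ, if_true]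
  refine Finset.sum_congr rfl fun i _ => Finset.sum_congr rfl fun j _ => by ring

lemma trace_mul_eigen {n : ℕ} (X Y : Matrix (Fin n) (Fin n) ℝ)
    (hX : X.IsHermitian) (hY : Y.IsHermitian) :
    trace (X * Y) = ∑ i, ∑ j,
      (((star (hX.eigenvectorUnitary : Matrix (Fin n) (Fin n) ℝ)) *
        (hY.eigenvectorUnitary : Matrix (Fin n) (Fin n) ℝ)) i j)^2
        * (hX.eigenvalues i * hY.eigenvalues j) := by
  set U : Matrix (Fin n) (Fin n) ℝ := (hX.eigenvectorUnitary : Matrix (Fin n) (Fin n) ℝ) with hU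
  set V : Matrix (Fin n) (Fin n) ℝ := (hY.eigenvectorUnitary : Matrix (Fin n) (Fin n) ℝ) with hV
  set W : Matrix (Fin n) (Fin n) ℝ := star U * V with hW
  have hXs : X = U * diagonal hX.eigenvalues * star U := by
    have := hX.spectral_theorem; simpa using this
  have hYs : Y = V * diagonal hY.eigenvalues * star V := by
    have := hY.spectral_theorem; simpa using this
  have hUstar : U * star U = 1 := by
    rw [hU]
    exact (Matrix.mem_unitaryGroup_iff).mp hX.eigenvectorUnitary.2
  have hXY : X * Y = U * (diagonal hX.eigenvalues * W * diagonal hY.eigenvalues * star W) * star U := by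
    conv_lhs => rw [hXs, hYs]
    simp only [hW, Matrix.star_mul, star_star, Matrix.mul_assoc, hUstar, Matrix.mul_one]
  rw [hXY, Matrix.trace_mul_comm, ← Matrix.mul_assoc]
  have hUU : star U * U = 1 := by
    rw [hU]
    exact (Matrix.mem_unitaryGroup_iff').mp hX.eigenvectorUnitary.2
  rw [hUU, Matrix.one_mul, trace_diag]

/-- Von Neumann–Theobald, Lipschitz form: for real symmetric matrices `X, Y`,
`‖λ(X) − λ(Y)‖ ≤ ‖X − Y‖`, Euclidean norm on the left and Frobenius on the right. -/
theorem statement6 {n : ℕ} (X Y : Matrix (Fin n) (Fin n) ℝ)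
    (hX : X.IsHermitian) (hY : Y.IsHermitian) :
    Real.sqrt (∑ i, (eigd X i - eigd Y i) ^ 2)
      ≤ Real.sqrt (((X - Y) * (X - Y)).trace) := by
  set d : Fin n → ℝ := hX.eigenvalues with hd
  set e : Fin n → ℝ := hY.eigenvalues with he
  set σ : Equiv.Perm (Fin n) := Fin.revPerm.trans (Tuple.sort d) with hσ
  set τ : Equiv.Perm (Fin n) := Fin.revPerm.trans (Tuple.sort e) with hτ
  have ea : ∀ i, eigd X i = d (σ i) := by
    intro i; rw [eigd, dif_pos hX]; rfl
  have eb : ∀ i, eigd Y i = e (τ i) := by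
    intro i; rw [eigd, dif_pos hY]; rfl
  have haA : Antitone (eigd X) := by
    intro i j hij
    rw [ea, ea]
    exact Tuple.monotone_sort d (by
      show (Fin.revPerm j : Fin n) ≤ Fin.revPerm i
      simpa using Fin.rev_le_rev.mpr hij)
  have hbA : Antitone (eigd Y) := by
    intro i j hij
    rw [eb, eb]
    exact Tuple.monotone_sort e (by
      show (Fin.revPerm j : Fin n) ≤ Fin.revPerm i
      simpa using Fin.rev_le_rev.mpr hij)
  set U : Matrix (Fin n) (Fin n) ℝ := (hX.eigenvectorUnitary : Matrix (Fin n) (Fin n) ℝ) with hU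
  set V : Matrix (Fin n) (Fin n) ℝ := (hY.eigenvectorUnitary : Matrix (Fin n) (Fin n) ℝ) with hV
  set W : Matrix (Fin n) (Fin n) ℝ := star U * V with hW
  have hWmem : W ∈ Matrix.unitaryGroup (Fin n) ℝ :=
    mul_mem (Unitary.star_mem hX.eigenvectorUnitary.2) hY.eigenvectorUnitary.2
  have hW1 : W * star W = 1 := (Matrix.mem_unitaryGroup_iff).mp hWmem
  have hW1' : star W * W = 1 := (Matrix.mem_unitaryGroup_iff').mp hWmem
  set S : Fin n → Fin n → ℝ := fun i j => (W i j)^2 with hSdef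
  have hSnn : ∀ i j, 0 ≤ S i j := fun i j => sq_nonneg _
  have hrowS : ∀ i, ∑ j, S i j = 1 := by
    intro i
    have := congrFun (congrFun hW1 i) i
    rw [Matrix.mul_apply] at this
    simp only [Matrix.star_apply, star_trivial, Matrix.one_apply_eq] at this
    rw [← this]
    exact Finset.sum_congr rfl fun j _ => pow_two _
  have hcolS : ∀ j, ∑ i, S i j = 1 := by
    intro j
    have := congrFun (congrFun hW1' j) j
    rw [Matrix.mul_apply] at this
    simp only [Matrix.star_apply, star_trivial, Matrix.one_apply_eq] at this
    rw [← this]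
    exact Finset.sum_congr rfl fun i _ => pow_two _
  -- trace(X*Y) ≤ ∑ eigd X i * eigd Y i
  have htrXY : trace (X * Y) ≤ ∑ i, eigd X i * eigd Y i := by
    have h0 : trace (X * Y) = ∑ i, ∑ j, S i j * (d i * e j) := by
      rw [trace_mul_eigen X Y hX hY]
    have h1 : ∑ i, ∑ j, S i j * (d i * e j)
        = ∑ k, ∑ l, S (σ k) (τ l) * (eigd X k * eigd Y l) := by
      rw [← Equiv.sum_comp σ (fun i => ∑ j, S i j * (d i * e j))]
      refine Finset.sum_congr rfl fun k _ => ?_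
      rw [← Equiv.sum_comp τ (fun j => S (σ k) j * (d (σ k) * e j))]
      exact Finset.sum_congr rfl fun l _ => by rw [ea, eb]
    rw [h0, h1]
    exact keyFin _ _ haA hbA (fun k l => S (σ k) (τ l)) (fun k l => hSnn _ _)
      (fun k => by rw [Equiv.sum_comp τ (fun j => S (σ k) j)]; exact hrowS _)
      (fun l => by rw [Equiv.sum_comp σ (fun i => S i (τ l))]; exact hcolS _)
  -- trace (X*X) = ∑ (eigd X i)^2
  have trace_sq : ∀ (Z : Matrix (Fin n) (Fin n) ℝ) (hZ : Z.IsHermitian),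
      trace (Z * Z) = ∑ i, hZ.eigenvalues i ^ 2 := by
    intro Z hZ
    rw [trace_mul_eigen Z Z hZ hZ]
    have h1 : star (hZ.eigenvectorUnitary : Matrix (Fin n) (Fin n) ℝ) *
        (hZ.eigenvectorUnitary : Matrix (Fin n) (Fin n) ℝ) = 1 :=
      (Matrix.mem_unitaryGroup_iff').mp hZ.eigenvectorUnitary.2
    rw [h1]
    have h2 : ∀ i, ∑ j, ((1 : Matrix (Fin n) (Fin n) ℝ) i j)^2
        * (hZ.eigenvalues i * hZ.eigenvalues j) = hZ.eigenvalues i ^ 2 := by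
      intro i
      rw [Finset.sum_eq_single i]
      · simp [Matrix.one_apply_eq]; ring
      · intro j _ hji
        simp [Matrix.one_apply, (Ne.symm hji)]
      · simp
    exact Finset.sum_congr rfl fun i _ => h2 i
  have hXX : trace (X * X) = ∑ i, (eigd X i)^2 := by
    rw [trace_sq X hX, ← Equiv.sum_comp σ (fun i => d i ^ 2)]
    exact Finset.sum_congr rfl fun i _ => by rw [ea]
  have hYY : trace (Y * Y) = ∑ i, (eigd Y i)^2 := by
    rw [trace_sq Y hY, ← Equiv.sum_comp τ (fun i => e i ^ 2)]
    exact Finset.sum_congr rfl fun i _ => by rw [eb]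
  -- expand trace ((X-Y)*(X-Y))
  have htr : trace ((X - Y) * (X - Y))
      = trace (X * X) - 2 * trace (X * Y) + trace (Y * Y) := by
    have : (X - Y) * (X - Y) = X * X - X * Y - (Y * X - Y * Y) := by
      rw [Matrix.sub_mul, Matrix.mul_sub, Matrix.mul_sub]
    rw [this, Matrix.trace_sub, Matrix.trace_sub, Matrix.trace_sub,
      Matrix.trace_mul_comm Y X]
    ring
  apply Real.sqrt_le_sqrt
  have expand : ∑ i, (eigd X i - eigd Y i)^2
      = ∑ i, (eigd X i)^2 - 2 * ∑ i, eigd X i * eigd Y i + ∑ i, (eigd Y i)^2 := by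
    rw [Finset.mul_sum, ← Finset.sum_sub_distrib, ← Finset.sum_add_distrib]
    exact Finset.sum_congr rfl fun i _ => by ring
  rw [expand, htr, hXX, hYY]
  linarith
end

section
/- For any two real symmetric n×n matrices X and Y, ⟨λ(X), λ(Y)⟩ ≥ tr(XY), where λ(·) denotes the vector of eigenvalues in nonincreasing order and the left side is the Euclidean inner product on ℝⁿ. -/
open Matrix Finset in
lemma eigd_eq {n : ℕ} {X : Matrix (Fin n) (Fin n) ℝ} (hX : X.IsHermitian) (i : Fin n) :
    eigd X i = hX.eigenvalues (Tuple.sort hX.eigenvalues i.rev) := by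
  rw [eigd, dif_pos hX]

lemma eigd_antitone {n : ℕ} {X : Matrix (Fin n) (Fin n) ℝ} (hX : X.IsHermitian) :
    Antitone (eigd X) := by
  intro i j hij
  rw [eigd_eq hX, eigd_eq hX]
  exact Tuple.monotone_sort hX.eigenvalues (Fin.rev_le_rev.2 hij)

/-- Key permutation lemma: any permuted pairing of eigenvalues is dominated by the
sorted pairing. -/
lemma sum_perm_le_eigd {n : ℕ} {X Y : Matrix (Fin n) (Fin n) ℝ}
    (hX : X.IsHermitian) (hY : Y.IsHermitian) (σ : Equiv.Perm (Fin n)) :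
    ∑ i, hX.eigenvalues i * hY.eigenvalues (σ i) ≤ ∑ i, eigd X i * eigd Y i := by
  set sX : Equiv.Perm (Fin n) := Fin.revPerm.trans (Tuple.sort hX.eigenvalues) with hsX
  set sY : Equiv.Perm (Fin n) := Fin.revPerm.trans (Tuple.sort hY.eigenvalues) with hsY
  have hXe : ∀ i, eigd X i = hX.eigenvalues (sX i) := fun i => by
    simp [eigd_eq hX, hsX, Equiv.trans_apply]
  have hYe : ∀ i, eigd Y i = hY.eigenvalues (sY i) := fun i => by
    simp [eigd_eq hY, hsY, Equiv.trans_apply]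
  set π : Equiv.Perm (Fin n) := (sX.trans σ).trans sY.symm with hπ
  have h1 : ∑ i, hX.eigenvalues i * hY.eigenvalues (σ i)
      = ∑ i, eigd X i * eigd Y (π i) := by
    rw [← Equiv.sum_comp sX (fun i => hX.eigenvalues i * hY.eigenvalues (σ i))]
    refine Finset.sum_congr rfl fun i _ => ?_
    rw [hXe, hYe]
    simp [hπ, Equiv.trans_apply]
  rw [h1]
  exact Monovary.sum_mul_comp_perm_le_sum_mul
    ((eigd_antitone hX).monovary (eigd_antitone hY))

/-- Von Neumann–Theobald trace inequality: for real symmetric matrices `X, Y`,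
`⟨λ(X), λ(Y)⟩ ≥ tr(XY)`. -/
theorem statement7 {n : ℕ} (X Y : Matrix (Fin n) (Fin n) ℝ)
    (hX : X.IsHermitian) (hY : Y.IsHermitian) :
    (X * Y).trace ≤ ∑ i, eigd X i * eigd Y i := by
  classical
  set d := hX.eigenvalues with hd
  set e := hY.eigenvalues with he
  set U := (hX.eigenvectorUnitary : Matrix (Fin n) (Fin n) ℝ) with hU
  set V := (hY.eigenvectorUnitary : Matrix (Fin n) (Fin n) ℝ) with hV
  have hUu : star U * U = 1 := Unitary.star_mul_self_of_mem hX.eigenvectorUnitary.2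
  have hUu' : U * star U = 1 := Unitary.mul_star_self_of_mem hX.eigenvectorUnitary.2
  have hVu : star V * V = 1 := Unitary.star_mul_self_of_mem hY.eigenvectorUnitary.2
  have hVu' : V * star V = 1 := Unitary.mul_star_self_of_mem hY.eigenvectorUnitary.2
  set W := star U * V with hW
  have hW1 : W * star W = 1 := by
    rw [hW, star_mul, star_star, Matrix.mul_assoc, ← Matrix.mul_assoc V, hVu',
      Matrix.one_mul, hUu]
  have hW2 : star W * W = 1 := by
    rw [hW, star_mul, star_star, Matrix.mul_assoc, ← Matrix.mul_assoc U, hUu',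
      Matrix.one_mul, hVu]
  -- trace computation
  have htr : (X * Y).trace = ∑ i, ∑ j, d i * e j * (W i j) ^ 2 := by
    have hXd : X = U * Matrix.diagonal d * star U := by
      have := hX.spectral_theorem
      simpa using this
    have hYd : Y = V * Matrix.diagonal e * star V := by
      have := hY.spectral_theorem
      simpa using this
    calc (X * Y).trace
        = (U * (Matrix.diagonal d * star U * (V * Matrix.diagonal e * star V))).trace := by
          rw [hXd, hYd]; simp only [Matrix.mul_assoc]
      _ = (Matrix.diagonal d * star U * (V * Matrix.diagonal e * star V) * U).trace := by
          rw [Matrix.trace_mul_comm]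
      _ = (Matrix.diagonal d * W * Matrix.diagonal e * (star W)).trace := by
          rw [hW, star_mul, star_star]
          congr 1
          simp only [Matrix.mul_assoc]
      _ = ∑ i, ∑ j, d i * e j * (W i j) ^ 2 := by
          set A := Matrix.diagonal d * W * Matrix.diagonal e with hAdef
          have hA : ∀ i j, A i j = d i * W i j * e j := by
            intro i j
            rw [hAdef, Matrix.mul_diagonal, Matrix.diagonal_mul]
          simp only [Matrix.trace, Matrix.diag, Matrix.mul_apply, hA, Matrix.star_apply,
            star_trivial]
          refine Finset.sum_congr rfl fun i _ => Finset.sum_congr rfl fun j _ => ?_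
          ring
  -- doubly stochastic matrix of squared entries
  have hS : Matrix.of (fun i j => (W i j) ^ 2) ∈ doublyStochastic ℝ (Fin n) := by
    rw [mem_doublyStochastic_iff_sum]
    refine ⟨fun i j => by simp only [Matrix.of_apply]; positivity, fun i => ?_, fun j => ?_⟩
    · have := congrFun (congrFun hW1 i) i
      simpa [Matrix.mul_apply, Matrix.one_apply, Matrix.star_apply, sq] using this
    · have := congrFun (congrFun hW2 j) j
      simpa [Matrix.mul_apply, Matrix.one_apply, Matrix.star_apply, sq] using this
  obtain ⟨w, hw0, hwsum, hwS⟩ := exists_eq_sum_perm_of_mem_doublyStochastic hS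
  have h2 : ∀ σ : Equiv.Perm (Fin n),
      ∑ i, ∑ j, d i * e j * (σ.permMatrix ℝ) i j = ∑ i, d i * e (σ i) := by
    intro σ
    refine Finset.sum_congr rfl fun i _ => ?_
    simp [Equiv.Perm.permMatrix, PEquiv.toMatrix_apply, Equiv.toPEquiv_apply, mul_ite,
      Finset.sum_ite_eq']
  rw [htr]
  have hrw : ∑ i, ∑ j, d i * e j * (W i j) ^ 2
      = ∑ σ : Equiv.Perm (Fin n), w σ * ∑ i, d i * e (σ i) := by
    calc ∑ i, ∑ j, d i * e j * (W i j) ^ 2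
        = ∑ i, ∑ j, ∑ σ : Equiv.Perm (Fin n),
            w σ * (d i * e j * (σ.permMatrix ℝ) i j) := by
          refine Finset.sum_congr rfl fun i _ => Finset.sum_congr rfl fun j _ => ?_
          have hWij : (W i j) ^ 2 = (∑ σ : Equiv.Perm (Fin n), w σ • σ.permMatrix ℝ) i j := by
            rw [hwS]; simp
          rw [hWij]
          simp only [Matrix.sum_apply, Matrix.smul_apply, smul_eq_mul, Finset.mul_sum]
          exact Finset.sum_congr rfl fun σ _ => by ring
      _ = ∑ σ : Equiv.Perm (Fin n), ∑ i, ∑ j,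
            w σ * (d i * e j * (σ.permMatrix ℝ) i j) := by
          rw [Finset.sum_congr rfl fun i (_ : i ∈ Finset.univ) => Finset.sum_comm]
          exact Finset.sum_comm
      _ = ∑ σ : Equiv.Perm (Fin n), w σ * ∑ i, d i * e (σ i) := by
          refine Finset.sum_congr rfl fun σ _ => ?_
          rw [← h2 σ, Finset.mul_sum]
          exact Finset.sum_congr rfl fun i _ => (Finset.mul_sum _ _ _).symm
  rw [hrw]
  calc ∑ σ : Equiv.Perm (Fin n), w σ * ∑ i, d i * e (σ i)
      ≤ ∑ σ : Equiv.Perm (Fin n), w σ * ∑ i, eigd X i * eigd Y i := by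
        refine Finset.sum_le_sum fun σ _ => ?_
        exact mul_le_mul_of_nonneg_left (sum_perm_le_eigd hX hY σ) (hw0 σ)
    _ = ∑ i, eigd X i * eigd Y i := by
        rw [← Finset.sum_mul, hwsum, one_mul]
end

section
/- Let F : Sⁿ → ℝ be orthogonally invariant and twice continuously differentiable at A ∈ Sⁿ. Then for every B ∈ Sⁿ and every skew-symmetric matrix W, ⟨∇²F(A)[B], [W, A]⟩ = ⟨B, [W, ∇F(A)]⟩, where [W, A] = WA − AW. -/
open Matrix

/-- Frobenius norm of a matrix. -/
noncomputable def fnorm {n : ℕ} (B : Matrix (Fin n) (Fin n) ℝ) : ℝ :=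
  Real.sqrt ((Bᵀ * B).trace)

/-- `G` is the gradient, with respect to the trace inner product on the space of
symmetric matrices, of `F : Sⁿ → ℝ` at the symmetric matrix `X`:
`F(X + B) = F(X) + ⟨G, B⟩ + o(‖B‖)` over symmetric perturbations `B`,
with `G` symmetric. -/
def HasSpecGradientAt {n : ℕ} (F : Matrix (Fin n) (Fin n) ℝ → ℝ)
    (X G : Matrix (Fin n) (Fin n) ℝ) : Prop :=
  G.IsHermitian ∧ ∀ ε : ℝ, 0 < ε → ∃ δ : ℝ, 0 < δ ∧
    ∀ B : Matrix (Fin n) (Fin n) ℝ, B.IsHermitian → fnorm B ≤ δ →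
      |F (X + B) - F X - (G * B).trace| ≤ ε * fnorm B

namespace Stmt16

variable {n : ℕ}

local notation "M" => Matrix (Fin n) (Fin n) ℝ

lemma herm_iff (X : M) : X.IsHermitian ↔ Xᵀ = X := by
  rw [Matrix.IsHermitian, Matrix.conjTranspose_eq_transpose_of_trivial]

lemma trace_form (X Y : M) : (Xᵀ * Y).trace = ∑ p : Fin n × Fin n, X p.1 p.2 * Y p.1 p.2 := by
  rw [Matrix.trace]
  simp only [Matrix.diag, Matrix.mul_apply, Matrix.transpose_apply]
  rw [Finset.sum_comm]
  exact (Fintype.sum_prod_type (f := fun p : Fin n × Fin n => X p.1 p.2 * Y p.1 p.2)).symm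

attribute [local instance] Matrix.frobeniusNormedAddCommGroup Matrix.frobeniusNormedRing
  Matrix.frobeniusNormedAlgebra

lemma fnorm_eq_norm (B : M) : fnorm B = ‖B‖ := by
  rw [fnorm, Matrix.frobenius_norm_def, trace_form]
  have h2 : ∀ i j : Fin n, ‖B i j‖ ^ (2:ℝ) = B i j * B i j := fun i j => by
    rw [Real.rpow_two, Real.norm_eq_abs, sq_abs, pow_two]
  simp_rw [h2]
  rw [show (∑ i : Fin n, ∑ j : Fin n, B i j * B i j) = ∑ p : Fin n × Fin n, B p.1 p.2 * B p.1 p.2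
    from (Fintype.sum_prod_type (f := fun p : Fin n × Fin n => B p.1 p.2 * B p.1 p.2)).symm,
    Real.sqrt_eq_rpow]

lemma fnorm_sq (B : M) : (Bᵀ * B).trace = ‖B‖ ^ 2 := by
  have h0 : (0:ℝ) ≤ (Bᵀ * B).trace := by
    rw [trace_form]; exact Finset.sum_nonneg fun p _ => mul_self_nonneg _
  have := fnorm_eq_norm B
  rw [fnorm] at this
  rw [← this, Real.sq_sqrt h0]

lemma cs (X Y : M) : |(X * Y).trace| ≤ ‖X‖ * ‖Y‖ := by
  have h : (X * Y).trace = ((Xᵀ)ᵀ * Y).trace := by rw [Matrix.transpose_transpose]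
  rw [h, trace_form]
  have hcs := Finset.sum_mul_sq_le_sq_mul_sq Finset.univ (fun p : Fin n × Fin n => Xᵀ p.1 p.2)
    (fun p : Fin n × Fin n => Y p.1 p.2)
  have h1 : |∑ p : Fin n × Fin n, Xᵀ p.1 p.2 * Y p.1 p.2|
      ≤ Real.sqrt ((∑ p : Fin n × Fin n, Xᵀ p.1 p.2 ^ 2) * ∑ p : Fin n × Fin n, Y p.1 p.2 ^ 2) := by
    rw [← Real.sqrt_sq_eq_abs]
    exact Real.sqrt_le_sqrt hcs
  refine h1.trans ?_
  rw [Real.sqrt_mul (Finset.sum_nonneg fun p _ => sq_nonneg _)]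
  have e1 : Real.sqrt (∑ p : Fin n × Fin n, Xᵀ p.1 p.2 ^ 2) = ‖X‖ := by
    rw [← Matrix.frobenius_norm_transpose, ← fnorm_eq_norm, fnorm, trace_form]
    congr 1; exact Finset.sum_congr rfl fun p _ => (pow_two _)
  have e2 : Real.sqrt (∑ p : Fin n × Fin n, Y p.1 p.2 ^ 2) = ‖Y‖ := by
    rw [← fnorm_eq_norm, fnorm, trace_form]
    congr 1; exact Finset.sum_congr rfl fun p _ => (pow_two _)
  rw [e1, e2]


lemma eq_zero_of_forall_abs_le {c x : ℝ} (h : ∀ ε : ℝ, 0 < ε → |x| ≤ ε * c) : x = 0 := by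
  by_contra hx
  have hx' : 0 < |x| := abs_pos.mpr hx
  have hc : 0 < c := lt_of_lt_of_le hx' (by simpa using h 1 one_pos)
  have h2 := h (|x| / (2 * c)) (by positivity)
  have h3 : |x| / (2 * c) * c = |x| / 2 := by field_simp
  rw [h3] at h2
  linarith

lemma herm_smul {c : ℝ} {D : M} (hD : D.IsHermitian) : (c • D).IsHermitian := by
  rw [herm_iff] at hD ⊢
  rw [Matrix.transpose_smul, hD]

lemma grad_unique {F : M → ℝ} {X G₁ G₂ : M} (h₁ : HasSpecGradientAt F X G₁)
    (h₂ : HasSpecGradientAt F X G₂) : G₁ = G₂ := by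
  obtain ⟨hs₁, hg₁⟩ := h₁
  obtain ⟨hs₂, hg₂⟩ := h₂
  set D : M := G₁ - G₂ with hD
  have hDs : D.IsHermitian := hs₁.sub hs₂
  have key : ∀ ε : ℝ, 0 < ε → |(D * D).trace| ≤ ε * (2 * ‖D‖) := by
    intro ε hε
    obtain ⟨δ₁, hδ₁, H₁⟩ := hg₁ ε hε
    obtain ⟨δ₂, hδ₂, H₂⟩ := hg₂ ε hε
    have hmin : 0 < min δ₁ δ₂ := lt_min hδ₁ hδ₂
    have hDn : (0:ℝ) ≤ ‖D‖ := norm_nonneg _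
    set c : ℝ := min δ₁ δ₂ / (‖D‖ + 1) with hc
    have hcpos : 0 < c := by positivity
    set B : M := c • D with hB
    have hBs : B.IsHermitian := herm_smul hDs
    have hBnorm : fnorm B = c * ‖D‖ := by
      rw [fnorm_eq_norm, hB, norm_smul, Real.norm_eq_abs, abs_of_pos hcpos]
    have hBle : fnorm B ≤ min δ₁ δ₂ := by
      rw [hBnorm, hc, div_mul_eq_mul_div, div_le_iff₀ (by positivity)]
      nlinarith
    have t₁ := H₁ B hBs (hBle.trans (min_le_left _ _))
    have t₂ := H₂ B hBs (hBle.trans (min_le_right _ _))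
    have tsub : (G₁ * B).trace - (G₂ * B).trace = c * (D * D).trace := by
      rw [← Matrix.trace_sub, ← Matrix.sub_mul, ← hD, hB, mul_smul_comm, Matrix.trace_smul,
        smul_eq_mul]
    have habs : |(G₁ * B).trace - (G₂ * B).trace| ≤ 2 * (ε * fnorm B) := by
      have := abs_sub (F (X + B) - F X - (G₂ * B).trace) (F (X + B) - F X - (G₁ * B).trace)
      calc |(G₁ * B).trace - (G₂ * B).trace|
          = |(F (X + B) - F X - (G₂ * B).trace) - (F (X + B) - F X - (G₁ * B).trace)| := by
            ring_nf
        _ ≤ |F (X + B) - F X - (G₂ * B).trace| + |F (X + B) - F X - (G₁ * B).trace| :=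
            abs_sub _ _
        _ ≤ ε * fnorm B + ε * fnorm B := add_le_add t₂ t₁
        _ = 2 * (ε * fnorm B) := by ring
    rw [tsub, hBnorm, abs_mul, abs_of_pos hcpos] at habs
    have h4 : c * |(D * D).trace| ≤ c * (ε * (2 * ‖D‖)) := by linarith
    exact (mul_le_mul_iff_right₀ hcpos).mp h4
  have h0 : (D * D).trace = 0 := eq_zero_of_forall_abs_le key
  have hDt : Dᵀ = D := (herm_iff D).mp hDs
  have hn2 : ‖D‖ ^ 2 = 0 := by rw [← fnorm_sq, hDt]; exact h0
  have hn : ‖D‖ = 0 := by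
    have := sq_nonneg ‖D‖; nlinarith [norm_nonneg D]
  have hD0 : D = 0 := norm_eq_zero.mp hn
  have : G₁ - G₂ = 0 := by rw [← hD]; exact hD0
  exact sub_eq_zero.mp this


lemma herm_conj {U X : M} (hU : U * Uᵀ = 1) (hX : X.IsHermitian) :
    (U * X * Uᵀ).IsHermitian := by
  rw [herm_iff] at hX ⊢
  calc (U * X * Uᵀ)ᵀ = Uᵀᵀ * (Xᵀ * Uᵀ) := by
        rw [Matrix.transpose_mul, Matrix.transpose_mul]
    _ = U * X * Uᵀ := by rw [Matrix.transpose_transpose, hX, Matrix.mul_assoc]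

lemma fnorm_conj {U B : M} (hU : U * Uᵀ = 1) : fnorm (Uᵀ * B * U) = fnorm B := by
  have hU' : Uᵀ * U = 1 := mul_eq_one_comm.mp hU
  rw [fnorm, fnorm]
  congr 1
  have e1 : (Uᵀ * B * U)ᵀ = Uᵀ * Bᵀ * U := by
    rw [Matrix.transpose_mul, Matrix.transpose_mul, Matrix.transpose_transpose,
      Matrix.mul_assoc]
  rw [e1]
  have e2 : Uᵀ * Bᵀ * U * (Uᵀ * B * U) = Uᵀ * (Bᵀ * B) * U := by
    calc Uᵀ * Bᵀ * U * (Uᵀ * B * U) = Uᵀ * Bᵀ * (U * Uᵀ) * (B * U) := by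
          simp only [Matrix.mul_assoc]
      _ = Uᵀ * (Bᵀ * B) * U := by rw [hU]; simp only [Matrix.mul_one, Matrix.mul_assoc]
  rw [e2, Matrix.trace_mul_cycle, ← Matrix.mul_assoc, hU, Matrix.one_mul]

lemma grad_equivariant {F : M → ℝ} {G : M → M}
    (hinv : ∀ U X : M, U * Uᵀ = 1 → X.IsHermitian → F (U * X * Uᵀ) = F X)
    (hG : ∀ X : M, X.IsHermitian → HasSpecGradientAt F X (G X))
    {U X : M} (hU : U * Uᵀ = 1) (hX : X.IsHermitian) :
    G (U * X * Uᵀ) = U * G X * Uᵀ := by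
  have hU' : Uᵀ * U = 1 := mul_eq_one_comm.mp hU
  have hXg := hG X hX
  have hUXU : (U * X * Uᵀ).IsHermitian := herm_conj hU hX
  refine grad_unique (hG _ hUXU) ⟨herm_conj hU hXg.1, ?_⟩
  intro ε hε
  obtain ⟨δ, hδ, hδs⟩ := hXg.2 ε hε
  refine ⟨δ, hδ, ?_⟩
  intro B hB hBn
  set B' : M := Uᵀ * B * U with hB'
  have hB's : B'.IsHermitian := by
    have := herm_conj hU' hB
    rwa [Matrix.transpose_transpose] at this
  have hfn : fnorm B' = fnorm B := fnorm_conj hU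
  have key1 : U * (X + B') * Uᵀ = U * X * Uᵀ + B := by
    rw [Matrix.mul_add, Matrix.add_mul]
    congr 1
    calc U * (Uᵀ * B * U) * Uᵀ = (U * Uᵀ) * B * (U * Uᵀ) := by simp only [Matrix.mul_assoc]
      _ = B := by rw [hU, Matrix.one_mul, Matrix.mul_one]
  have hF1 : F (U * X * Uᵀ + B) = F (X + B') := by
    rw [← key1]; exact hinv U (X + B') hU (hX.add hB's)
  have hF2 : F (U * X * Uᵀ) = F X := hinv U X hU hX
  have htr : ((U * G X * Uᵀ) * B).trace = (G X * B').trace := by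
    have e : (U * G X * Uᵀ) * B = U * (G X * (Uᵀ * B)) := by simp only [Matrix.mul_assoc]
    rw [e, Matrix.trace_mul_comm, hB']
    congr 1
    simp only [Matrix.mul_assoc]
  rw [hF1, hF2, htr, ← hfn]
  exact hδs B' hB's (hfn.le.trans hBn)


lemma fnorm_nonneg (B : M) : 0 ≤ fnorm B := Real.sqrt_nonneg _

lemma fnorm_smul (c : ℝ) (B : M) : fnorm (c • B) = |c| * fnorm B := by
  rw [fnorm_eq_norm, norm_smul, Real.norm_eq_abs, fnorm_eq_norm]

lemma hasDerivAt_line {F : M → ℝ} {G : M → M}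
    (hG : ∀ X : M, X.IsHermitian → HasSpecGradientAt F X (G X))
    {X D : M} (hX : X.IsHermitian) (hD : D.IsHermitian) (τ : ℝ) :
    HasDerivAt (fun s : ℝ => F (X + s • D)) ((G (X + τ • D) * D).trace) τ := by
  set Y : M := X + τ • D with hY
  have hYs : Y.IsHermitian := hX.add (herm_smul hD)
  obtain ⟨-, hspec⟩ := hG Y hYs
  rw [hasDerivAt_iff_isLittleO, Asymptotics.isLittleO_iff]
  intro c hc
  have hfD : 0 ≤ fnorm D := fnorm_nonneg D
  obtain ⟨δ, hδ, hb⟩ := hspec (c / (fnorm D + 1)) (by positivity)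
  have hev : ∀ᶠ s in nhds τ, |s - τ| ≤ δ / (fnorm D + 1) := by
    have hmem : Metric.closedBall τ (δ / (fnorm D + 1)) ∈ nhds τ :=
      Metric.closedBall_mem_nhds τ (by positivity)
    filter_upwards [hmem] with s hs
    simpa [Real.dist_eq] using hs
  filter_upwards [hev] with s hs
  have hXsD : X + s • D = Y + (s - τ) • D := by
    have e : τ • D + (s - τ) • D = s • D := by rw [← add_smul]; ring_nf
    rw [hY, add_assoc, e]
  have hherm : ((s - τ) • D).IsHermitian := herm_smul hD
  have hfn : fnorm ((s - τ) • D) = |s - τ| * fnorm D := fnorm_smul _ _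
  have hle : fnorm ((s - τ) • D) ≤ δ := by
    rw [hfn]
    calc |s - τ| * fnorm D ≤ (δ / (fnorm D + 1)) * (fnorm D + 1) :=
          mul_le_mul hs (by linarith) hfD (by positivity)
      _ = δ := by field_simp
  have hmain := hb _ hherm hle
  rw [← hXsD] at hmain
  have htr : (G Y * ((s - τ) • D)).trace = (s - τ) * (G Y * D).trace := by
    rw [mul_smul_comm, Matrix.trace_smul, smul_eq_mul]
  rw [htr] at hmain
  rw [Real.norm_eq_abs, Real.norm_eq_abs, smul_eq_mul]
  refine hmain.trans ?_
  rw [hfn]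
  have h2 : c / (fnorm D + 1) * (|s - τ| * fnorm D)
      = (c * (fnorm D / (fnorm D + 1))) * |s - τ| := by ring
  rw [h2]
  have h1 : c * (fnorm D / (fnorm D + 1)) ≤ c := by
    have h3 : fnorm D / (fnorm D + 1) ≤ 1 := by
      rw [div_le_one (by positivity)]; linarith
    nlinarith
  exact mul_le_mul_of_nonneg_right h1 (abs_nonneg _)


lemma fnorm_add_le (X Y : M) : fnorm (X + Y) ≤ fnorm X + fnorm Y := by
  rw [fnorm_eq_norm, fnorm_eq_norm, fnorm_eq_norm]; exact norm_add_le X Y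

lemma mvt_claim {F : M → ℝ} {G : M → M} {H : M →ₗ[ℝ] M} {A : M} (hA : A.IsHermitian)
    (hG : ∀ X : M, X.IsHermitian → HasSpecGradientAt F X (G X))
    {B C : M} (hB : B.IsHermitian) (hC : C.IsHermitian) {ε δ s : ℝ}
    (hε : 0 < ε) (hδ : 0 < δ) (hs : 0 < s)
    (hspec : ∀ B' : M, B'.IsHermitian → fnorm B' ≤ δ →
      fnorm (G (A + B') - G A - H B') ≤ ε * fnorm B')
    (hsmall : s * (fnorm B + fnorm C) ≤ δ) :
    |(F (A + s • C + s • B) - F (A + s • B) - F (A + s • C) + F A)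
        - s ^ 2 * ((H C) * B).trace|
      ≤ 2 * ε * s ^ 2 * ((fnorm B + fnorm C) * fnorm B) := by
  have hXs : (A + s • C).IsHermitian := hA.add (herm_smul hC)
  have hsBs : (s • B).IsHermitian := herm_smul hB
  have hnb : 0 ≤ fnorm B := fnorm_nonneg B
  have hnc : 0 ≤ fnorm C := fnorm_nonneg C
  set g : ℝ → ℝ := fun τ => F (A + s • C + τ • (s • B)) - F (A + τ • (s • B)) with hgdef
  have hg : ∀ τ : ℝ, HasDerivAt g
      ((G (A + s • C + τ • (s • B)) * (s • B)).trace
        - (G (A + τ • (s • B)) * (s • B)).trace) τ :=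
    fun τ => (hasDerivAt_line hG hXs hsBs τ).sub (hasDerivAt_line hG hA hsBs τ)
  obtain ⟨τ, hτ, heq⟩ := exists_hasDerivAt_eq_slope g _ zero_lt_one
    (fun τ _ => ((hg τ).continuousAt).continuousWithinAt) (fun τ _ => hg τ)
  have hτ0 : 0 < τ := hτ.1
  have hτ1 : τ < 1 := hτ.2
  have hg1 : g 1 = F (A + s • C + s • B) - F (A + s • B) := by
    simp only [hgdef, one_smul]
  have hg0 : g 0 = F (A + s • C) - F A := by
    simp only [hgdef, zero_smul, add_zero]
  -- now analyze the derivative at τ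
  set M₁ : M := s • C + τ • (s • B) with hM₁def
  set M₂ : M := τ • (s • B) with hM₂def
  have hM₁s : M₁.IsHermitian := (herm_smul hC).add (herm_smul hsBs)
  have hM₂s : M₂.IsHermitian := herm_smul hsBs
  have hfM₂ : fnorm M₂ = τ * (s * fnorm B) := by
    rw [hM₂def, fnorm_smul, fnorm_smul, abs_of_pos hτ0, abs_of_pos hs]
  have hfM₂le : fnorm M₂ ≤ s * (fnorm B + fnorm C) := by
    rw [hfM₂]
    nlinarith [mul_le_mul_of_nonneg_right hτ1.le (mul_nonneg hs.le hnb), mul_nonneg hs.le hnc]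
  have hfM₁le : fnorm M₁ ≤ s * (fnorm B + fnorm C) := by
    refine (fnorm_add_le _ _).trans ?_
    rw [← hM₂def, hfM₂, fnorm_smul, abs_of_pos hs]
    nlinarith [mul_le_mul_of_nonneg_right hτ1.le (mul_nonneg hs.le hnb)]
  set E₁ : M := G (A + M₁) - G A - H M₁ with hE₁def
  set E₂ : M := G (A + M₂) - G A - H M₂ with hE₂def
  have hE₁ : fnorm E₁ ≤ ε * (s * (fnorm B + fnorm C)) :=
    (hspec M₁ hM₁s (hfM₁le.trans hsmall)).trans (mul_le_mul_of_nonneg_left hfM₁le hε.le)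
  have hE₂ : fnorm E₂ ≤ ε * (s * (fnorm B + fnorm C)) :=
    (hspec M₂ hM₂s (hfM₂le.trans hsmall)).trans (mul_le_mul_of_nonneg_left hfM₂le hε.le)
  have hHsub : H M₁ - H M₂ = H (s • C) := by
    rw [← map_sub]; congr 1; rw [hM₁def, hM₂def]; abel
  have hGdiff : G (A + M₁) - G (A + M₂) = H (s • C) + (E₁ - E₂) := by
    rw [hE₁def, hE₂def, ← hHsub]; abel
  have harg1 : A + s • C + τ • (s • B) = A + M₁ := by rw [hM₁def]; abel
  have harg2 : A + τ • (s • B) = A + M₂ := by rw [hM₂def]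
  have hkey : (G (A + s • C + τ • (s • B)) * (s • B)).trace
      - (G (A + τ • (s • B)) * (s • B)).trace
      = s ^ 2 * ((H C) * B).trace + ((E₁ - E₂) * (s • B)).trace := by
    rw [harg1, harg2, ← Matrix.trace_sub, ← Matrix.sub_mul, hGdiff, Matrix.add_mul,
      Matrix.trace_add]
    congr 1
    rw [_root_.map_smul, smul_mul_assoc, mul_smul_comm, Matrix.trace_smul, Matrix.trace_smul,
      smul_eq_mul, smul_eq_mul]
    ring
  have herr : |((E₁ - E₂) * (s • B)).trace| ≤ 2 * ε * s ^ 2 * ((fnorm B + fnorm C) * fnorm B) := by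
    refine (cs _ _).trans ?_
    have h1 : ‖E₁ - E₂‖ ≤ 2 * (ε * (s * (fnorm B + fnorm C))) := by
      refine (norm_sub_le _ _).trans ?_
      rw [← fnorm_eq_norm, ← fnorm_eq_norm]; linarith
    have h2 : ‖s • B‖ = s * fnorm B := by
      rw [← fnorm_eq_norm, fnorm_smul, abs_of_pos hs]
    rw [h2]
    have h3 : (0:ℝ) ≤ s * fnorm B := by positivity
    calc ‖E₁ - E₂‖ * (s * fnorm B) ≤ (2 * (ε * (s * (fnorm B + fnorm C)))) * (s * fnorm B) :=
          mul_le_mul_of_nonneg_right h1 h3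
      _ = 2 * ε * s ^ 2 * ((fnorm B + fnorm C) * fnorm B) := by ring
  -- combine
  have hΔ : F (A + s • C + s • B) - F (A + s • B) - F (A + s • C) + F A = g 1 - g 0 := by
    rw [hg1, hg0]; ring
  rw [hΔ]
  have hslope : g 1 - g 0 = s ^ 2 * ((H C) * B).trace + ((E₁ - E₂) * (s • B)).trace := by
    have heq' := heq
    rw [show (1:ℝ) - 0 = 1 by norm_num, div_one] at heq'
    rw [← heq']
    exact hkey
  rw [hslope]
  calc |s ^ 2 * ((H C) * B).trace + ((E₁ - E₂) * (s • B)).trace - s ^ 2 * ((H C) * B).trace|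
      = |((E₁ - E₂) * (s • B)).trace| := by ring_nf
    _ ≤ 2 * ε * s ^ 2 * ((fnorm B + fnorm C) * fnorm B) := herr


lemma hess_symm {F : M → ℝ} {G : M → M} {H : M →ₗ[ℝ] M} {A : M} (hA : A.IsHermitian)
    (hG : ∀ X : M, X.IsHermitian → HasSpecGradientAt F X (G X))
    (hH : ∀ ε : ℝ, 0 < ε → ∃ δ : ℝ, 0 < δ ∧
      ∀ B : M, B.IsHermitian → fnorm B ≤ δ →
        fnorm (G (A + B) - G A - H B) ≤ ε * fnorm B)
    {B C : M} (hB : B.IsHermitian) (hC : C.IsHermitian) :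
    ((H B) * C).trace = ((H C) * B).trace := by
  have hnb : 0 ≤ fnorm B := fnorm_nonneg B
  have hnc : 0 ≤ fnorm C := fnorm_nonneg C
  set K : ℝ := 2 * ((fnorm B + fnorm C) * fnorm B) + 2 * ((fnorm B + fnorm C) * fnorm C)
    with hK
  have key : ∀ ε : ℝ, 0 < ε → |((H C) * B).trace - ((H B) * C).trace| ≤ ε * K := by
    intro ε hε
    obtain ⟨δ, hδ, hspec⟩ := hH ε hε
    set s : ℝ := δ / (fnorm B + fnorm C + 1) with hsdef
    have hs : 0 < s := by positivity
    have hsmall : s * (fnorm B + fnorm C) ≤ δ := by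
      rw [hsdef, div_mul_eq_mul_div, div_le_iff₀ (by positivity)]
      nlinarith
    have h₁ := mvt_claim hA hG hB hC hε hδ hs hspec hsmall
    have hsmall' : s * (fnorm C + fnorm B) ≤ δ := by rw [add_comm (fnorm C)]; exact hsmall
    have h₂ := mvt_claim hA hG hC hB hε hδ hs hspec hsmall'
    have harg : A + s • B + s • C = A + s • C + s • B := by abel
    rw [harg] at h₂
    have hcomb : |s ^ 2 * ((H C) * B).trace - s ^ 2 * ((H B) * C).trace|
        ≤ ε * (s ^ 2 * K) := by
      have htri := abs_sub
        ((F (A + s • C + s • B) - F (A + s • B) - F (A + s • C) + F A)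
          - s ^ 2 * ((H B) * C).trace)
        ((F (A + s • C + s • B) - F (A + s • B) - F (A + s • C) + F A)
          - s ^ 2 * ((H C) * B).trace)
      have heqa : |s ^ 2 * ((H C) * B).trace - s ^ 2 * ((H B) * C).trace|
          = |((F (A + s • C + s • B) - F (A + s • B) - F (A + s • C) + F A)
              - s ^ 2 * ((H B) * C).trace)
            - ((F (A + s • C + s • B) - F (A + s • B) - F (A + s • C) + F A)
              - s ^ 2 * ((H C) * B).trace)| := by ring_nf
      rw [heqa]
      have h₂' : |(F (A + s • C + s • B) - F (A + s • B) - F (A + s • C) + F A)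
          - s ^ 2 * ((H B) * C).trace| ≤ 2 * ε * s ^ 2 * ((fnorm C + fnorm B) * fnorm C) := by
        have e : F (A + s • C + s • B) - F (A + s • B) - F (A + s • C) + F A
            = F (A + s • C + s • B) - F (A + s • C) - F (A + s • B) + F A := by ring
        rw [e]; exact h₂
      refine (htri.trans (add_le_add h₂' h₁)).trans ?_
      rw [hK]; ring_nf
      nlinarith [sq_nonneg s]
    have hs2 : (0:ℝ) < s ^ 2 := by positivity
    have hfac : |s ^ 2 * ((H C) * B).trace - s ^ 2 * ((H B) * C).trace|
        = s ^ 2 * |((H C) * B).trace - ((H B) * C).trace| := by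
      rw [← mul_sub, abs_mul, abs_of_pos hs2]
    rw [hfac] at hcomb
    have := (mul_le_mul_iff_right₀ hs2).mp (by linarith : s ^ 2 * |((H C) * B).trace
        - ((H B) * C).trace| ≤ s ^ 2 * (ε * K))
    exact this
  have h0 := eq_zero_of_forall_abs_le key
  linarith [h0]


open NormedSpace in
lemma comm_rel {F : M → ℝ} {G : M → M} {H : M →ₗ[ℝ] M} {A : M} (hA : A.IsHermitian)
    (hinv : ∀ U X : M, U * Uᵀ = 1 → X.IsHermitian → F (U * X * Uᵀ) = F X)
    (hG : ∀ X : M, X.IsHermitian → HasSpecGradientAt F X (G X))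
    (hH : ∀ ε : ℝ, 0 < ε → ∃ δ : ℝ, 0 < δ ∧
      ∀ B : M, B.IsHermitian → fnorm B ≤ δ →
        fnorm (G (A + B) - G A - H B) ≤ ε * fnorm B)
    {W : M} (hW : Wᵀ = -W) :
    H (W * A - A * W) = W * G A - G A * W := by
  set f : ℝ → M := fun t => exp (t • W) with hfdef
  have hft : ∀ t : ℝ, (f t)ᵀ = exp (-(t • W)) := fun t => by
    rw [hfdef]
    dsimp only
    rw [← Matrix.exp_transpose, Matrix.transpose_smul, hW, smul_neg]
  have horth : ∀ t : ℝ, f t * (f t)ᵀ = 1 := fun t => by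
    rw [hft]
    have hcomm : Commute (t • W) (-(t • W)) := (Commute.refl _).neg_right
    show exp (t • W) * exp (-(t • W)) = 1
    have h1 := Matrix.exp_add_of_commute (t • W) (-(t • W)) hcomm
    rw [add_neg_cancel] at h1
    exact h1.symm.trans exp_zero
  have hf0 : f 0 = 1 := by rw [hfdef]; dsimp only; rw [zero_smul]; exact exp_zero
  have hdf : HasDerivAt f W 0 := by
    have h := hasDerivAt_exp_smul_const (𝕂 := ℝ) W (0 : ℝ)
    simp [zero_smul, exp_zero] at h
    exact h
  have hdft : HasDerivAt (fun t : ℝ => (f t)ᵀ) Wᵀ 0 := by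
    have h := hasDerivAt_exp_smul_const (𝕂 := ℝ) Wᵀ (0 : ℝ)
    have heqf : (fun t : ℝ => (f t)ᵀ) = fun t : ℝ => exp (t • Wᵀ) := by
      funext t
      rw [hft t]
      congr 1
      rw [hW, smul_neg]
    rw [heqf]
    simp [zero_smul, exp_zero] at h
    exact h
  have mkDeriv : ∀ X : M, HasDerivAt (fun t => f t * X * (f t)ᵀ) (W * X - X * W) 0 := by
    intro X
    have h1 : HasDerivAt (fun t => f t * X) (W * X) 0 := by exact hdf.mul_const X
    have h2 := h1.mul hdft
    simp only [hf0, Matrix.transpose_one, Matrix.mul_one, Matrix.one_mul] at h2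
    convert h2 using 1 <;> try rfl
    rw [hW]
    noncomm_ring
  have hu := mkDeriv A
  have hv := mkDeriv (G A)
  set ψ : ℝ → M := fun t => f t * A * (f t)ᵀ - A with hψdef
  have hψ : HasDerivAt ψ (W * A - A * W) 0 := hu.sub_const A
  have hψ0 : ψ 0 = 0 := by
    rw [hψdef]; dsimp only; rw [hf0, Matrix.transpose_one, Matrix.mul_one, Matrix.one_mul,
      sub_self]
  have hψs : ∀ t : ℝ, (ψ t).IsHermitian := fun t => (herm_conj (horth t) hA).sub hA
  have hGψ : ∀ t : ℝ, G (A + ψ t) = f t * G A * (f t)ᵀ := fun t => by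
    have e : A + ψ t = f t * A * (f t)ᵀ := by rw [hψdef]; dsimp only; abel
    rw [e, grad_equivariant hinv hG (horth t) hA]
  have hHψ : HasDerivAt (fun t => H (ψ t)) (H (W * A - A * W)) 0 := by
    have hc := (LinearMap.toContinuousLinearMap H).hasFDerivAt (x := ψ 0)
    have h2 := hc.comp_hasDerivAt (x := (0:ℝ)) hψ
    exact h2
  set h : ℝ → M := fun t => f t * G A * (f t)ᵀ - G A - H (ψ t) with hhdef
  set K : M := H (W * A - A * W) - (W * G A - G A * W) with hKdef
  have hDh : HasDerivAt h (-K) 0 := by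
    have := (hv.sub_const (G A)).sub hHψ
    have e : W * G A - G A * W - H (W * A - A * W) = -K := by rw [hKdef]; abel
    rwa [e] at this
  have hh0 : h 0 = 0 := by
    rw [hhdef]; dsimp only
    rw [hf0, Matrix.transpose_one, Matrix.mul_one, Matrix.one_mul, hψ0, map_zero, sub_zero,
      sub_self]
  set c : ℝ := ‖W * A - A * W‖ with hcdef
  have hc0 : 0 ≤ c := norm_nonneg _
  have hKnorm : ∀ ε : ℝ, 0 < ε → |‖K‖| ≤ ε * (c + 2) := by
    intro ε hε
    obtain ⟨δ, hδ, hspec⟩ := hH ε hε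
    have e1 : ∀ᶠ t in nhds (0:ℝ), ‖h t - h 0 - (t - 0) • (-K)‖ ≤ ε * ‖t - 0‖ :=
      Asymptotics.isLittleO_iff.mp (hasDerivAt_iff_isLittleO.mp hDh) hε
    have e2 : ∀ᶠ t in nhds (0:ℝ), ‖ψ t - ψ 0 - (t - 0) • (W * A - A * W)‖ ≤ 1 * ‖t - 0‖ :=
      Asymptotics.isLittleO_iff.mp (hasDerivAt_iff_isLittleO.mp hψ) one_pos
    have e3 : ∀ᶠ t in nhds (0:ℝ), |t| ≤ δ / (c + 1) := by
      have hmem : Metric.closedBall (0:ℝ) (δ / (c + 1)) ∈ nhds (0:ℝ) :=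
        Metric.closedBall_mem_nhds 0 (by positivity)
      filter_upwards [hmem] with t ht
      simpa [Real.dist_eq] using ht
    have hall := (e1.and (e2.and e3))
    rw [Metric.eventually_nhds_iff] at hall
    obtain ⟨r, hr, hball⟩ := hall
    set t : ℝ := r / 2 with htdef
    have ht0 : 0 < t := by positivity
    have htr : dist t 0 < r := by
      rw [Real.dist_eq, sub_zero, abs_of_pos ht0, htdef]; linarith
    obtain ⟨h1t, h2t, h3t⟩ := hball htr
    simp only [hh0, hψ0, sub_zero] at h1t h2t
    rw [Real.norm_eq_abs, abs_of_pos ht0] at h1t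
    rw [Real.norm_eq_abs, abs_of_pos ht0] at h2t
    -- bound on ψ t
    have hψt : ‖ψ t‖ ≤ (c + 1) * t := by
      have := norm_sub_norm_le (ψ t) (t • (W * A - A * W))
      have hn : ‖t • (W * A - A * W)‖ = t * c := by
        rw [norm_smul, Real.norm_eq_abs, abs_of_pos ht0, hcdef]
      nlinarith [h2t, norm_nonneg (ψ t)]
    have hψδ : fnorm (ψ t) ≤ δ := by
      rw [fnorm_eq_norm]
      refine hψt.trans ?_
      have h4 : t ≤ δ / (c + 1) := by
        rw [abs_of_pos ht0] at h3t; exact h3t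
      calc (c + 1) * t ≤ (c + 1) * (δ / (c + 1)) :=
            mul_le_mul_of_nonneg_left h4 (by positivity)
        _ = δ := by field_simp
    have hmain := hspec (ψ t) (hψs t) hψδ
    rw [hGψ t] at hmain
    have hht : ‖h t‖ ≤ ε * ((c + 1) * t) := by
      rw [hhdef]
      dsimp only
      rw [← fnorm_eq_norm]
      refine hmain.trans ?_
      rw [fnorm_eq_norm]
      exact mul_le_mul_of_nonneg_left hψt hε.le
    -- combine
    have htk : ‖t • K‖ = t * ‖K‖ := by
      rw [norm_smul, Real.norm_eq_abs, abs_of_pos ht0]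
    have htri : ‖t • K‖ ≤ ‖h t - t • (-K)‖ + ‖h t‖ := by
      have e : t • K = (h t - t • (-K)) - h t := by rw [smul_neg]; abel
      rw [e]
      exact norm_sub_le _ _
    have hfinal : t * ‖K‖ ≤ ε * t + ε * ((c + 1) * t) := by
      rw [← htk]
      refine htri.trans ?_
      have := h1t
      nlinarith [h1t, hht]
    rw [abs_of_nonneg (norm_nonneg K)]
    have h5 : t * ‖K‖ ≤ t * (ε * (c + 2)) := by nlinarith
    exact (mul_le_mul_iff_right₀ ht0).mp h5
  have hK0 : ‖K‖ = 0 := eq_zero_of_forall_abs_le hKnorm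
  have : K = 0 := norm_eq_zero.mp hK0
  rw [hKdef] at this
  exact sub_eq_zero.mp this

end Stmt16

/-- If `F : Sⁿ → ℝ` is orthogonally invariant and twice differentiable at the
symmetric matrix `A`, with gradient field `G` and Hessian `H = ∇²F(A)`, then for
every symmetric `B` and skew-symmetric `W`,
`⟨∇²F(A)[B], [W, A]⟩ = ⟨B, [W, ∇F(A)]⟩`. -/


theorem statement16 {n : ℕ} (F : Matrix (Fin n) (Fin n) ℝ → ℝ)
    (G : Matrix (Fin n) (Fin n) ℝ → Matrix (Fin n) (Fin n) ℝ)
    (H : Matrix (Fin n) (Fin n) ℝ →ₗ[ℝ] Matrix (Fin n) (Fin n) ℝ)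
    (A : Matrix (Fin n) (Fin n) ℝ) (hA : A.IsHermitian)
    (hinv : ∀ U X : Matrix (Fin n) (Fin n) ℝ, U * Uᵀ = 1 → X.IsHermitian →
      F (U * X * Uᵀ) = F X)
    (hG : ∀ X : Matrix (Fin n) (Fin n) ℝ, X.IsHermitian → HasSpecGradientAt F X (G X))
    (hGcont : ContinuousAt G A)
    (hH : ∀ ε : ℝ, 0 < ε → ∃ δ : ℝ, 0 < δ ∧
      ∀ B : Matrix (Fin n) (Fin n) ℝ, B.IsHermitian → fnorm B ≤ δ →
        fnorm (G (A + B) - G A - H B) ≤ ε * fnorm B) :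
    ∀ (B W : Matrix (Fin n) (Fin n) ℝ), B.IsHermitian → Wᵀ = -W →
      (H B * (W * A - A * W)).trace = (B * (W * G A - G A * W)).trace := by
  intro B W hB hW
  have hAt : Aᵀ = A := (Stmt16.herm_iff A).mp hA
  have hC : (W * A - A * W).IsHermitian := by
    rw [Stmt16.herm_iff]
    rw [Matrix.transpose_sub, Matrix.transpose_mul, Matrix.transpose_mul, hW, hAt]
    simp only [Matrix.mul_neg, Matrix.neg_mul]
    abel
  have hrel := Stmt16.comm_rel hA hinv hG hH hW
  have hsym := Stmt16.hess_symm hA hG hH hB hC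
  rw [hsym, hrel, Matrix.trace_mul_comm]
end

section
/- Let F : Sⁿ → ℝ be orthogonally invariant and differentiable at A ∈ Sⁿ. Then every orthogonal matrix U stabilizing A (i.e., UAUᵀ = A) also stabilizes ∇F(A): U ∇F(A) Uᵀ = ∇F(A). -/
open Matrix

lemma trace_tmul_nonneg {n : ℕ} (H : Matrix (Fin n) (Fin n) ℝ) :
    0 ≤ (Hᵀ * H).trace := by
  rw [Matrix.trace]
  apply Finset.sum_nonneg
  intro i _
  simp only [Matrix.diag, Matrix.mul_apply, Matrix.transpose_apply]
  exact Finset.sum_nonneg fun k _ => mul_self_nonneg _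

lemma eq_zero_of_trace_tmul {n : ℕ} (H : Matrix (Fin n) (Fin n) ℝ)
    (h : (Hᵀ * H).trace = 0) : H = 0 := by
  ext i j
  rw [Matrix.trace] at h
  have h1 := (Finset.sum_eq_zero_iff_of_nonneg (fun i _ => by
    simp only [Matrix.diag, Matrix.mul_apply, Matrix.transpose_apply]
    exact Finset.sum_nonneg fun k _ => mul_self_nonneg _ :
      ∀ i ∈ Finset.univ, (0:ℝ) ≤ (Hᵀ*H).diag i)).mp h j (Finset.mem_univ j)
  simp only [Matrix.diag, Matrix.mul_apply, Matrix.transpose_apply] at h1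
  have h2 := (Finset.sum_eq_zero_iff_of_nonneg
    (fun k _ => mul_self_nonneg (H k j))).mp h1 i (Finset.mem_univ i)
  simpa [mul_self_eq_zero] using h2

lemma fnorm_nonneg {n : ℕ} (B : Matrix (Fin n) (Fin n) ℝ) : 0 ≤ fnorm B :=
  Real.sqrt_nonneg _

lemma fnorm_smul {n : ℕ} (c : ℝ) (B : Matrix (Fin n) (Fin n) ℝ) :
    fnorm (c • B) = |c| * fnorm B := by
  unfold fnorm
  rw [Matrix.transpose_smul, Matrix.smul_mul, Matrix.mul_smul, smul_smul,
    Matrix.trace_smul, smul_eq_mul, Real.sqrt_mul (mul_self_nonneg c),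
    Real.sqrt_mul_self_eq_abs]

lemma fnorm_conj {n : ℕ} (U B : Matrix (Fin n) (Fin n) ℝ) (hU : Uᵀ * U = 1) :
    fnorm (U * B * Uᵀ) = fnorm B := by
  unfold fnorm
  congr 1
  rw [Matrix.transpose_mul, Matrix.transpose_mul, Matrix.transpose_transpose]
  simp only [Matrix.mul_assoc]
  rw [← Matrix.mul_assoc Uᵀ U, hU, Matrix.one_mul,
    Matrix.trace_mul_comm U (Bᵀ * (B * Uᵀ))]
  simp only [Matrix.mul_assoc]
  rw [hU, Matrix.mul_one]

lemma isHermitian_transpose_eq {n : ℕ} {B : Matrix (Fin n) (Fin n) ℝ}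
    (h : B.IsHermitian) : Bᵀ = B := by
  rw [← Matrix.conjTranspose_eq_transpose_of_trivial]; exact h

/-- If `F : Sⁿ → ℝ` is orthogonally invariant and differentiable at the symmetric
matrix `A` with gradient `G`, then every orthogonal `U` stabilizing `A`
(`UAUᵀ = A`) also stabilizes the gradient: `U G Uᵀ = G`. -/
theorem statement18 {n : ℕ} (F : Matrix (Fin n) (Fin n) ℝ → ℝ)
    (A G : Matrix (Fin n) (Fin n) ℝ) (hA : A.IsHermitian)
    (hinv : ∀ U X : Matrix (Fin n) (Fin n) ℝ, U * Uᵀ = 1 → X.IsHermitian →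
      F (U * X * Uᵀ) = F X)
    (hG : HasSpecGradientAt F A G)
    (U : Matrix (Fin n) (Fin n) ℝ) (hU : U * Uᵀ = 1) (hUA : U * A * Uᵀ = A) :
    U * G * Uᵀ = G := by
  have hUtU : Uᵀ * U = 1 := mul_eq_one_comm.mp hU
  set H : Matrix (Fin n) (Fin n) ℝ := G - Uᵀ * G * U with hHdef
  -- H is symmetric
  have hGt : Gᵀ = G := isHermitian_transpose_eq hG.1
  have hHt : Hᵀ = H := by
    rw [hHdef, Matrix.transpose_sub, Matrix.transpose_mul, Matrix.transpose_mul,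
      Matrix.transpose_transpose, hGt, Matrix.mul_assoc]
  have hHherm : H.IsHermitian := by
    rw [Matrix.IsHermitian, Matrix.conjTranspose_eq_transpose_of_trivial, hHt]
  -- key estimate
  have key : ∀ ε : ℝ, 0 < ε → (H * H).trace ≤ 2 * ε * fnorm H := by
    intro ε hε
    rcases eq_or_ne H 0 with h0 | h0
    · have hf0 : fnorm (0 : Matrix (Fin n) (Fin n) ℝ) = 0 := by simp [fnorm]
      simp [h0, hf0]
    obtain ⟨δ, hδ, hb⟩ := hG.2 ε hε
    have hfH : 0 < fnorm H := by
      rcases (fnorm_nonneg H).lt_or_eq with h | h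
      · exact h
      · exfalso; apply h0
        apply eq_zero_of_trace_tmul
        have : Real.sqrt ((Hᵀ * H).trace) = 0 := h.symm
        have h2 := trace_tmul_nonneg H
        nlinarith [Real.sq_sqrt h2, this]
    set c : ℝ := δ / fnorm H with hc
    have hcpos : 0 < c := div_pos hδ hfH
    set B : Matrix (Fin n) (Fin n) ℝ := c • H with hB
    have hBherm : B.IsHermitian := by
      rw [Matrix.IsHermitian, Matrix.conjTranspose_smul, hHherm.eq]
      simp
      rfl
    have hfB : fnorm B = c * fnorm H := by
      rw [hB, fnorm_smul, abs_of_pos hcpos]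
    have hfBle : fnorm B ≤ δ := by
      rw [hfB, hc, div_mul_cancel₀ _ (ne_of_gt hfH)]
    -- bound 1
    have h1 := hb B hBherm hfBle
    -- conjugated perturbation
    set B' : Matrix (Fin n) (Fin n) ℝ := U * B * Uᵀ with hB'
    have hB'herm : B'.IsHermitian := by
      rw [Matrix.IsHermitian, Matrix.conjTranspose_eq_transpose_of_trivial, hB',
        Matrix.transpose_mul, Matrix.transpose_mul, Matrix.transpose_transpose,
        isHermitian_transpose_eq hBherm, Matrix.mul_assoc]
    have hfB' : fnorm B' = fnorm B := fnorm_conj U B hUtU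
    have h2 := hb B' hB'herm (hfB' ▸ hfBle)
    -- F(A + B') = F(A + B)
    have hFeq : F (A + B') = F (A + B) := by
      have hABherm : (A + B).IsHermitian := hA.add hBherm
      have := hinv U (A + B) hU hABherm
      rw [← this]
      congr 1
      rw [Matrix.mul_add, Matrix.add_mul, hUA, hB']
    rw [hFeq] at h2
    -- trace(G * B') = trace((Uᵀ G U) * B)
    have htr : (G * B').trace = ((Uᵀ * G * U) * B).trace := by
      rw [hB', ← Matrix.mul_assoc, ← Matrix.mul_assoc,
        Matrix.trace_mul_comm (G * U * B) Uᵀ]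
      simp only [Matrix.mul_assoc]
    rw [htr, hfB'] at h2
    -- combine
    have hcomb : |(G * B).trace - ((Uᵀ * G * U) * B).trace| ≤ 2 * ε * fnorm B := by
      have := abs_sub (F (A + B) - F A - ((Uᵀ * G * U) * B).trace)
        (F (A + B) - F A - (G * B).trace)
      calc |(G * B).trace - ((Uᵀ * G * U) * B).trace|
          = |(F (A + B) - F A - ((Uᵀ * G * U) * B).trace)
              - (F (A + B) - F A - (G * B).trace)| := by congr 1; ring
        _ ≤ |F (A + B) - F A - ((Uᵀ * G * U) * B).trace|
              + |F (A + B) - F A - (G * B).trace| := abs_sub _ _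
        _ ≤ ε * fnorm B + ε * fnorm B := add_le_add h2 h1
        _ = 2 * ε * fnorm B := by ring
    have htrH : (G * B).trace - ((Uᵀ * G * U) * B).trace = c * (H * H).trace := by
      rw [hB, Matrix.mul_smul, Matrix.mul_smul, Matrix.trace_smul, Matrix.trace_smul,
        smul_eq_mul, smul_eq_mul, ← mul_sub]
      congr 1
      rw [hHdef, Matrix.sub_mul, Matrix.trace_sub]
    rw [htrH, hfB] at hcomb
    have hub : c * (H * H).trace ≤ c * (2 * ε * fnorm H) := by
      calc c * (H * H).trace ≤ 2 * ε * (c * fnorm H) := (abs_le.mp hcomb).2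
        _ = c * (2 * ε * fnorm H) := by ring
    exact le_of_mul_le_mul_left hub hcpos
  -- deduce trace(H*H) ≤ 0
  have hle : (H * H).trace ≤ 0 := by
    by_contra hpos
    push_neg at hpos
    have hfHpos : 0 ≤ fnorm H := fnorm_nonneg H
    have hden : (0:ℝ) < fnorm H + 1 := by linarith
    have hkey := key ((H * H).trace / (2 * (fnorm H + 1)))
      (div_pos hpos (by linarith))
    have heq : 2 * ((H * H).trace / (2 * (fnorm H + 1))) * fnorm H
        = (H * H).trace * fnorm H / (fnorm H + 1) := by
      field_simp
    rw [heq, le_div_iff₀ hden] at hkey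
    nlinarith [hkey, hpos]
  have hzero : (Hᵀ * H).trace = 0 :=
    le_antisymm (by rw [hHt]; exact hle) (trace_tmul_nonneg H)
  have hH0 : H = 0 := eq_zero_of_trace_tmul H hzero
  have hGU : G = Uᵀ * G * U := by
    have := sub_eq_zero.mp hH0
    exact this
  calc U * G * Uᵀ = U * (Uᵀ * G * U) * Uᵀ := by rw [← hGU]
    _ = G := by
        simp only [Matrix.mul_assoc]
        rw [hU, Matrix.mul_one, ← Matrix.mul_assoc, hU, Matrix.one_mul]
end
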